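/- arXiv:2510.07732 — 5 statements merged into one kernel-verified Lean document; each statement's English description precedes it below -/
import Mathlib

section
/- Let p be a probability measure on ℝ^d with positive continuously differentiable density whose score ∇log p has at most polynomial growth, and let R ∈ ℝ^{d×d} be orthogonal. Then the relative-score cross-covariance matrix transforms equivariantly under rotation: H(R#p) = R H(p) Rᵀ, where R#p is the pushforward of p under x ↦ Rx. -/
open MeasureTheory ProbabilityTheory Matrix

open Real Set
open scoped ENNReal NNReal

lemma lintegral_pi_prod : ∀ {n : ℕ} (μ : Fin n → Measure ℝ), (∀ i, SigmaFinite (μ i)) →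
    ∀ (f : Fin n → ℝ → ℝ≥0∞), (∀ i, Measurable (f i)) →
    ∫⁻ x, ∏ i, f i (x i) ∂(Measure.pi μ) = ∏ i, ∫⁻ y, f i y ∂(μ i) := by
  intro n
  induction n with
  | zero =>
      intro μ _ f _
      simp [Measure.pi_univ]
  | succ n ih =>
      intro μ hσ f hf
      haveI : ∀ i, SigmaFinite (μ i) := hσ
      have e := MeasureTheory.measurePreserving_piFinSuccAbove μ 0
      have hg : Measurable fun z : Fin n → ℝ => ∏ j, f (Fin.succAbove 0 j) (z j) :=
        Finset.measurable_prod _ fun j _ => (hf _).comp (measurable_pi_apply j)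
      have hmeas : Measurable (fun p : ℝ × (Fin n → ℝ) =>
          f 0 p.1 * ∏ j, f (Fin.succAbove 0 j) (p.2 j)) :=
        ((hf 0).comp measurable_fst).mul (hg.comp measurable_snd)
      calc ∫⁻ x, ∏ i, f i (x i) ∂Measure.pi μ
          = ∫⁻ p, f 0 p.1 * ∏ j, f (Fin.succAbove 0 j) (p.2 j)
              ∂((μ 0).prod (Measure.pi fun j => μ (Fin.succAbove 0 j))) := by
            rw [← e.lintegral_comp hmeas]
            congr 1; ext x
            rw [Fin.prod_univ_succAbove (fun i => f i (x i)) 0]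
            rfl
        _ = (∫⁻ y, f 0 y ∂μ 0) *
              ∏ j, ∫⁻ y, f (Fin.succAbove 0 j) y ∂μ (Fin.succAbove 0 j) := by
            rw [lintegral_prod_mul (hf 0).aemeasurable hg.aemeasurable,
              ih _ (fun j => hσ _) _ (fun j => hf _)]
        _ = ∏ i, ∫⁻ y, f i y ∂μ i := (Fin.prod_univ_succAbove (fun i => ∫⁻ y, f i y ∂μ i) 0).symm

/-- The standard Gaussian measure `γ = N(0, I_d)` on `ℝ^d`. -/
noncomputable def stdGaussian (d : ℕ) : Measure (Fin d → ℝ) :=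
  Measure.pi fun _ => ProbabilityTheory.gaussianReal 0 1

lemma measurable_prod_gaussianPDF (d : ℕ) :
    Measurable fun x : Fin d → ℝ => ∏ i, gaussianPDF 0 1 (x i) :=
  Finset.measurable_prod _ fun i _ => (measurable_gaussianPDF 0 1).comp (measurable_pi_apply i)

lemma stdGaussian_eq_withDensity (d : ℕ) :
    stdGaussian d = (volume : Measure (Fin d → ℝ)).withDensity
      (fun x => ∏ i, gaussianPDF 0 1 (x i)) := by
  refine Measure.pi_eq fun s hs => ?_
  rw [withDensity_apply _ (MeasurableSet.univ_pi hs), ← lintegral_indicator (MeasurableSet.univ_pi hs) _]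
  have hind : (Set.indicator (Set.pi Set.univ s) fun x => ∏ i, gaussianPDF 0 1 (x i))
      = fun x => ∏ i, (s i).indicator (gaussianPDF 0 1) (x i) := by
    ext x
    by_cases hx : x ∈ Set.pi Set.univ s
    · rw [Set.indicator_of_mem hx]
      exact Finset.prod_congr rfl fun i _ => (Set.indicator_of_mem (hx i trivial) _).symm
    · rw [Set.indicator_of_notMem hx]
      rw [Set.mem_univ_pi] at hx
      push_neg at hx
      obtain ⟨i, hi⟩ := hx
      exact (Finset.prod_eq_zero (Finset.mem_univ i) (Set.indicator_of_notMem hi _)).symm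
  rw [hind, volume_pi, lintegral_pi_prod _ (fun _ => inferInstance) _
    (fun i => (measurable_gaussianPDF 0 1).indicator (hs i))]
  refine Finset.prod_congr rfl fun i _ => ?_
  rw [lintegral_indicator (hs i) _, gaussianReal_of_var_ne_zero _ one_ne_zero,
    withDensity_apply _ (hs i)]

lemma continuous_mulVec {d : ℕ} (M : Matrix (Fin d) (Fin d) ℝ) : Continuous M.mulVec := by
  have h : M.mulVec = ⇑(Matrix.toLin' M) := by
    funext x; simp [Matrix.toLin'_apply]
  rw [h]
  exact LinearMap.continuous_on_pi _

noncomputable def mulVecEquiv {d : ℕ} (R : Matrix (Fin d) (Fin d) ℝ) (hR : R * Rᵀ = 1) :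
    (Fin d → ℝ) ≃ᵐ (Fin d → ℝ) where
  toFun := R.mulVec
  invFun := Rᵀ.mulVec
  left_inv x := by rw [Matrix.mulVec_mulVec, mul_eq_one_comm.mp hR, Matrix.one_mulVec]
  right_inv x := by rw [Matrix.mulVec_mulVec, hR, Matrix.one_mulVec]
  measurable_toFun := (continuous_mulVec R).measurable
  measurable_invFun := (continuous_mulVec Rᵀ).measurable

lemma map_withDensity_equiv {α β : Type*} [MeasurableSpace α] [MeasurableSpace β]
    (e : α ≃ᵐ β) (μ : Measure α) (g : α → ℝ≥0∞) (hg : Measurable g) :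
    Measure.map e (μ.withDensity g) = (Measure.map e μ).withDensity (g ∘ e.symm) := by
  ext s hs
  rw [Measure.map_apply e.measurable hs, withDensity_apply _ (e.measurable hs),
    withDensity_apply _ hs, setLIntegral_map hs (hg.comp e.symm.measurable) e.measurable]
  refine setLIntegral_congr_fun (e.measurable hs) (fun x _ => ?_)
  simp

lemma abs_det_eq_one {d : ℕ} (R : Matrix (Fin d) (Fin d) ℝ) (hR : R * Rᵀ = 1) :
    |R.det| = 1 := by
  have h : R.det * R.det = 1 := by
    have h2 := congrArg Matrix.det hR
    rwa [Matrix.det_mul, Matrix.det_transpose, Matrix.det_one] at h2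
  rcases mul_self_eq_one_iff.mp h with h1 | h1 <;> simp [h1]

lemma map_mulVec_volume {d : ℕ} (R : Matrix (Fin d) (Fin d) ℝ) (hR : R * Rᵀ = 1) :
    Measure.map R.mulVec (volume : Measure (Fin d → ℝ)) = volume := by
  have hdet : R.det ≠ 0 := by
    intro h
    have h2 := abs_det_eq_one R hR
    rw [h] at h2
    simp at h2
  have h : ⇑(Matrix.toLin' R) = R.mulVec := by
    funext x; simp [Matrix.toLin'_apply]
  rw [← h, Real.map_matrix_volume_pi_eq_smul_volume_pi hdet, abs_inv, abs_det_eq_one R hR]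
  simp

lemma sum_sq_mulVec {d : ℕ} (R : Matrix (Fin d) (Fin d) ℝ) (hR : R * Rᵀ = 1) (x : Fin d → ℝ) :
    ∑ i, (Rᵀ.mulVec x i) ^ 2 = ∑ i, x i ^ 2 := by
  have h : Rᵀ.mulVec x ⬝ᵥ Rᵀ.mulVec x = x ⬝ᵥ x := by
    nth_rewrite 1 [Matrix.mulVec_transpose]
    rw [← Matrix.dotProduct_mulVec, Matrix.mulVec_mulVec, hR, Matrix.one_mulVec]
  simpa [dotProduct, pow_two] using h

lemma prod_gaussianPDF_eq {d : ℕ} (v : Fin d → ℝ) :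
    ∏ i, gaussianPDF 0 1 (v i)
      = ENNReal.ofReal ((√(2 * π))⁻¹ ^ d * rexp (-(∑ i, v i ^ 2) / 2)) := by
  have h : ∀ i : Fin d, gaussianPDF 0 1 (v i)
      = ENNReal.ofReal ((√(2 * π))⁻¹ * rexp (-(v i ^ 2) / 2)) := by
    intro i
    simp [gaussianPDF, gaussianPDFReal]
  rw [Finset.prod_congr rfl fun i _ => h i,
    ← ENNReal.ofReal_prod_of_nonneg (fun i _ => by positivity)]
  congr 1
  rw [Finset.prod_mul_distrib, Finset.prod_const, ← Real.exp_sum]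
  congr 1
  · simp
  · rw [← Finset.sum_div, ← Finset.sum_neg_distrib]

lemma prod_gaussianPDF_comp {d : ℕ} (R : Matrix (Fin d) (Fin d) ℝ) (hR : R * Rᵀ = 1)
    (x : Fin d → ℝ) :
    ∏ i, gaussianPDF 0 1 (Rᵀ.mulVec x i) = ∏ i, gaussianPDF 0 1 (x i) := by
  rw [prod_gaussianPDF_eq, prod_gaussianPDF_eq, sum_sq_mulVec R hR]

lemma measurePreserving_mulVec {d : ℕ} (R : Matrix (Fin d) (Fin d) ℝ) (hR : R * Rᵀ = 1) :
    MeasurePreserving R.mulVec (stdGaussian d) (stdGaussian d) := by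
  refine ⟨(continuous_mulVec R).measurable, ?_⟩
  rw [stdGaussian_eq_withDensity]
  have h : Measure.map R.mulVec ((volume : Measure (Fin d → ℝ)).withDensity
        (fun x => ∏ i, gaussianPDF 0 1 (x i)))
      = Measure.map (mulVecEquiv R hR) ((volume : Measure (Fin d → ℝ)).withDensity
        (fun x => ∏ i, gaussianPDF 0 1 (x i))) := rfl
  rw [h, map_withDensity_equiv _ _ _ (measurable_prod_gaussianPDF d)]
  have h2 : Measure.map (mulVecEquiv R hR) (volume : Measure (Fin d → ℝ)) = volume := by
    have : ⇑(mulVecEquiv R hR) = R.mulVec := rfl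
    rw [this, map_mulVec_volume R hR]
  rw [h2]
  congr 1
  funext x
  have h3 : (mulVecEquiv R hR).symm x = Rᵀ.mulVec x := rfl
  simp only [Function.comp_apply, h3]
  exact prod_gaussianPDF_comp R hR x

/-- The Euclidean norm `‖x‖₂` on `ℝ^d`. -/
noncomputable def norm2 {d : ℕ} (x : Fin d → ℝ) : ℝ :=
  Real.sqrt (∑ i, x i ^ 2)

/-- The `i`-th partial derivative `∂ᵢ log f` of the log of a density `f`. -/
noncomputable def partialLog {d : ℕ} (f : (Fin d → ℝ) → ℝ) (i : Fin d) (x : Fin d → ℝ) : ℝ :=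
  fderiv ℝ (fun z => Real.log (f z)) x (Pi.single i 1)

lemma clm_pi_apply {d : ℕ} (D : (Fin d → ℝ) →L[ℝ] ℝ) (v : Fin d → ℝ) :
    D v = ∑ k, v k * D (Pi.single k 1) := by
  have hv : v = ∑ k, v k • (Pi.single k 1 : Fin d → ℝ) := by
    conv_lhs => rw [← Finset.univ_sum_single v]
    refine Finset.sum_congr rfl fun k _ => ?_
    rw [← Pi.single_smul, smul_eq_mul, mul_one]
  conv_lhs => rw [hv]
  rw [map_sum]
  refine Finset.sum_congr rfl fun k _ => ?_
  rw [_root_.map_smul, smul_eq_mul]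

lemma partialLog_comp {d : ℕ} (f : (Fin d → ℝ) → ℝ) (hf_pos : ∀ x, 0 < f x)
    (hf_smooth : ContDiff ℝ 1 f) (R : Matrix (Fin d) (Fin d) ℝ) (j : Fin d) (x : Fin d → ℝ) :
    partialLog (fun z => f (Rᵀ.mulVec z)) j x
      = ∑ k, R j k * partialLog f k (Rᵀ.mulVec x) := by
  classical
  set L : (Fin d → ℝ) →L[ℝ] (Fin d → ℝ) :=
    LinearMap.toContinuousLinearMap (Matrix.toLin' Rᵀ) with hL
  have hLx : ∀ z, L z = Rᵀ.mulVec z := fun z => by simp [hL, Matrix.toLin'_apply]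
  have hg : DifferentiableAt ℝ (fun y => Real.log (f y)) (L x) :=
    ((hf_smooth.differentiable one_ne_zero) _).log (ne_of_gt (hf_pos _))
  have hcomp : (fun z => Real.log (f (Rᵀ.mulVec z))) = (fun y => Real.log (f y)) ∘ ⇑L := by
    funext z; simp [hLx]
  unfold partialLog
  rw [hcomp, fderiv_comp x hg L.differentiableAt, L.fderiv]
  rw [ContinuousLinearMap.coe_comp', Function.comp_apply]
  have hsingle : L (Pi.single j 1) = fun k => R j k := by
    funext k
    rw [hLx]
    simp [Matrix.mulVec_single]
  rw [hsingle, clm_pi_apply]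
  refine Finset.sum_congr rfl fun k _ => ?_
  rw [hLx x]

lemma continuous_partialLog {d : ℕ} (f : (Fin d → ℝ) → ℝ) (hf_pos : ∀ x, 0 < f x)
    (hf_smooth : ContDiff ℝ 1 f) (k : Fin d) : Continuous (partialLog f k) := by
  have hlog : ContDiff ℝ 1 fun z => Real.log (f z) :=
    hf_smooth.log fun x => ne_of_gt (hf_pos x)
  exact (hlog.continuous_fderiv one_ne_zero).clm_apply continuous_const

lemma integrable_abs_pow_mul_gaussianPDFReal (k : ℕ) :
    Integrable (fun t : ℝ => |t| ^ k * gaussianPDFReal 0 1 t) := by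
  have hb : (0:ℝ) < 2⁻¹ := by norm_num
  have h := integrable_rpow_mul_exp_neg_mul_sq hb (s := (k:ℝ))
    (lt_of_lt_of_le neg_one_lt_zero (Nat.cast_nonneg k))
  simp_rw [Real.rpow_natCast] at h
  have h2 := (h.abs).const_mul ((√(2 * π))⁻¹)
  refine h2.congr (Filter.Eventually.of_forall fun t => ?_)
  simp only
  rw [abs_mul, abs_pow, abs_of_pos (Real.exp_pos _), gaussianPDFReal]
  push_cast
  rw [mul_one, mul_one, sub_zero]
  ring_nf

lemma integrable_one_add_abs_pow_mul_gaussianPDFReal (N : ℕ) :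
    Integrable (fun t : ℝ => (1 + |t|) ^ N * gaussianPDFReal 0 1 t) := by
  have hsum : ∀ t : ℝ, (1 + |t|) ^ N * gaussianPDFReal 0 1 t
      = ∑ k ∈ Finset.range (N + 1),
          (N.choose k : ℝ) * (|t| ^ k * gaussianPDFReal 0 1 t) := by
    intro t
    rw [add_comm (1:ℝ), add_pow, Finset.sum_mul]
    refine Finset.sum_congr rfl fun k _ => by ring
  simp_rw [hsum]
  exact integrable_finset_sum _ fun k _ =>
    ((integrable_abs_pow_mul_gaussianPDFReal k).const_mul _)

lemma integrable_prod_one_add_abs (d N : ℕ) :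
    Integrable (fun x : Fin d → ℝ => ∏ i, (1 + |x i|) ^ N) (stdGaussian d) := by
  rw [stdGaussian_eq_withDensity,
    integrable_withDensity_iff (measurable_prod_gaussianPDF d)
      (Filter.Eventually.of_forall fun x =>
        ENNReal.prod_lt_top fun i _ => ENNReal.ofReal_lt_top)]
  have hfun : ∀ x : Fin d → ℝ,
      (∏ i, (1 + |x i|) ^ N) * (∏ i, gaussianPDF 0 1 (x i)).toReal
        = ∏ i, ((1 + |x i|) ^ N * gaussianPDFReal 0 1 (x i)) := by
    intro x
    have : ∏ i, gaussianPDF 0 1 (x i)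
        = ENNReal.ofReal (∏ i, gaussianPDFReal 0 1 (x i)) := by
      simp only [gaussianPDF]
      rw [← ENNReal.ofReal_prod_of_nonneg fun i _ => gaussianPDFReal_nonneg 0 1 (x i)]
    rw [this, ENNReal.toReal_ofReal
      (Finset.prod_nonneg fun i _ => gaussianPDFReal_nonneg 0 1 (x i)),
      Finset.prod_mul_distrib]
  simp_rw [hfun]
  exact MeasureTheory.Integrable.fin_nat_prod
    fun i => integrable_one_add_abs_pow_mul_gaussianPDFReal N

lemma sum_le_prod_one_add : ∀ {d : ℕ} (a : Fin d → ℝ), (∀ i, 0 ≤ a i) →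
    ∑ i, a i ≤ ∏ i, (1 + a i) := by
  intro d
  induction d with
  | zero => intro a _; simp
  | succ n ih =>
      intro a ha
      rw [Fin.sum_univ_succ, Fin.prod_univ_succ]
      have h2 := ih (fun i => a i.succ) fun i => ha _
      have hp1 : (1:ℝ) ≤ ∏ i, (1 + a (Fin.succ i)) := by
        calc (1:ℝ) = ∏ _i : Fin n, (1:ℝ) := by simp
          _ ≤ ∏ i, (1 + a (Fin.succ i)) :=
            Finset.prod_le_prod (by simp) (fun i _ => by linarith [ha i.succ])
      nlinarith [ha 0]

lemma one_le_prod_one_add {d : ℕ} (x : Fin d → ℝ) : (1:ℝ) ≤ ∏ i, (1 + |x i|) := by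
  calc (1:ℝ) = ∏ _i : Fin d, (1:ℝ) := by simp
    _ ≤ ∏ i, (1 + |x i|) :=
      Finset.prod_le_prod (by simp) (fun i _ => by linarith [abs_nonneg (x i)])

lemma norm2_le_prod {d : ℕ} (x : Fin d → ℝ) : norm2 x ≤ ∏ i, (1 + |x i|) := by
  have h1 : norm2 x ≤ ∑ i, |x i| := by
    rw [norm2]
    have h2 : ∑ i, x i ^ 2 ≤ (∑ i, |x i|) ^ 2 := by
      have := Finset.sum_sq_le_sq_sum_of_nonneg
        (s := Finset.univ) (f := fun i => |x i|) (fun i _ => abs_nonneg (x i))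
      simpa [sq_abs] using this
    calc Real.sqrt (∑ i, x i ^ 2) ≤ Real.sqrt ((∑ i, |x i|) ^ 2) := Real.sqrt_le_sqrt h2
      _ = ∑ i, |x i| := by
          rw [Real.sqrt_sq (Finset.sum_nonneg fun i _ => abs_nonneg _)]
  exact h1.trans (sum_le_prod_one_add _ fun i => abs_nonneg _)

lemma abs_coord_le_prod {d : ℕ} (x : Fin d → ℝ) (l : Fin d) :
    |x l| ≤ ∏ i, (1 + |x i|) := by
  rw [← Finset.mul_prod_erase Finset.univ _ (Finset.mem_univ l)]
  have hp1 : (1:ℝ) ≤ ∏ i ∈ Finset.univ.erase l, (1 + |x i|) := by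
    calc (1:ℝ) = ∏ _i ∈ Finset.univ.erase l, (1:ℝ) := by simp
      _ ≤ ∏ i ∈ Finset.univ.erase l, (1 + |x i|) :=
        Finset.prod_le_prod (by simp) (fun i _ => by linarith [abs_nonneg (x i)])
  nlinarith [abs_nonneg (x l)]

lemma norm2_nonneg {d : ℕ} (x : Fin d → ℝ) : 0 ≤ norm2 x := Real.sqrt_nonneg _

lemma integrable_base {d : ℕ} (f : (Fin d → ℝ) → ℝ) (hf_pos : ∀ x, 0 < f x)
    (hf_smooth : ContDiff ℝ 1 f)
    (h_score_poly : ∃ c : ℝ, ∃ m : ℕ, 0 < c ∧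
      ∀ x, norm2 (fun i => partialLog f i x) ≤ c * (1 + norm2 x ^ m))
    (l k : Fin d) :
    Integrable (fun y : Fin d → ℝ => y l * (partialLog f k y + y k)) (stdGaussian d) := by
  obtain ⟨c, m, hc, hbound⟩ := h_score_poly
  have hcont : Continuous fun y : Fin d → ℝ => y l * (partialLog f k y + y k) :=
    (continuous_apply l).mul
      ((continuous_partialLog f hf_pos hf_smooth k).add (continuous_apply k))
  have hgint : Integrable
      (fun y : Fin d → ℝ => (2 * c + 1) * ∏ i, (1 + |y i|) ^ (m + 2)) (stdGaussian d) :=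
    (integrable_prod_one_add_abs d (m + 2)).const_mul _
  refine hgint.mono hcont.aestronglyMeasurable (Filter.Eventually.of_forall fun y => ?_)
  simp only [Real.norm_eq_abs]
  set P := ∏ i, (1 + |y i|) with hP
  have hprodpow : ∏ i, (1 + |y i|) ^ (m + 2) = P ^ (m + 2) := by
    rw [hP, ← Finset.prod_pow]
  have hP1 : 1 ≤ P := one_le_prod_one_add y
  have hP0 : (0:ℝ) ≤ P := zero_le_one.trans hP1
  have hPm1 : (1:ℝ) ≤ P ^ m := by
    calc (1:ℝ) = 1 ^ m := (one_pow m).symm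
      _ ≤ P ^ m := pow_le_pow_left₀ zero_le_one hP1 m
  have hsk : |partialLog f k y| ≤ c * (1 + norm2 y ^ m) := by
    refine le_trans ?_ (hbound y)
    rw [← Real.sqrt_sq_eq_abs, norm2]
    exact Real.sqrt_le_sqrt (Finset.single_le_sum
      (f := fun i => (partialLog f i y) ^ 2) (fun i _ => sq_nonneg _) (Finset.mem_univ k))
  have hn2 : norm2 y ^ m ≤ P ^ m := pow_le_pow_left₀ (norm2_nonneg y) (norm2_le_prod y) m
  have hstep : |y l * (partialLog f k y + y k)| ≤ P * (2 * c * P ^ m + P) := by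
    rw [abs_mul]
    refine mul_le_mul (abs_coord_le_prod y l) ?_ (abs_nonneg _) hP0
    calc |partialLog f k y + y k| ≤ |partialLog f k y| + |y k| := abs_add_le _ _
      _ ≤ c * (1 + norm2 y ^ m) + P := add_le_add hsk (abs_coord_le_prod y k)
      _ ≤ c * (P ^ m + P ^ m) + P := by
          refine add_le_add_left (mul_le_mul_of_nonneg_left ?_ hc.le) P
          exact add_le_add hPm1 hn2
      _ = 2 * c * P ^ m + P := by ring
  refine hstep.trans ?_
  rw [hprodpow]
  have h1 : P * (2 * c * P ^ m) = 2 * c * P ^ (m + 1) := by ring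
  have h2 : P ^ (m + 1) ≤ P ^ (m + 2) := pow_le_pow_right₀ hP1 (by omega)
  have h3 : P * P ≤ P ^ (m + 2) := by
    calc P * P = P ^ 2 := (sq P).symm
      _ ≤ P ^ (m + 2) := pow_le_pow_right₀ hP1 (by omega)
  have h4 : (0:ℝ) ≤ P ^ (m + 2) := pow_nonneg hP0 _
  have habs : |(2 * c + 1) * P ^ (m + 2)| = (2 * c + 1) * P ^ (m + 2) :=
    abs_of_nonneg (mul_nonneg (by linarith) h4)
  rw [habs]
  nlinarith [pow_nonneg hP0 (m+1), pow_nonneg hP0 m]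

/-- The relative-score cross-covariance matrix
`H(p) = ∫ x (∇ log p(x) + x)ᵀ dγ(x)`, i.e. `H i j = E_γ[x i * (∂ⱼ log p(x) + x j)]`. -/
noncomputable def crossCov (d : ℕ) (f : (Fin d → ℝ) → ℝ) : Matrix (Fin d) (Fin d) ℝ :=
  Matrix.of fun i j => ∫ x, x i * (partialLog f j x + x j) ∂(stdGaussian d)

/-- Let `p` be a probability measure on `ℝ^d` with positive continuously
differentiable density `f` whose score has at most polynomial growth, and let `R` be
orthogonal.  Then the relative-score cross-covariance matrix transforms equivariantly under
rotation: `H(R#p) = R H(p) Rᵀ`, where the pushforward `R#p` has density `x ↦ p(Rᵀ x)`. -/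
theorem crossCov_rotation_equivariant
    {d : ℕ} (f : (Fin d → ℝ) → ℝ) (hf_pos : ∀ x, 0 < f x) (hf_smooth : ContDiff ℝ 1 f)
    (hp_prob : IsProbabilityMeasure
      ((volume : Measure (Fin d → ℝ)).withDensity fun x => ENNReal.ofReal (f x)))
    (h_score_poly : ∃ c : ℝ, ∃ m : ℕ, 0 < c ∧
      ∀ x, norm2 (fun i => partialLog f i x) ≤ c * (1 + norm2 x ^ m))
    (R : Matrix (Fin d) (Fin d) ℝ) (hR : R * R.transpose = 1) :
    crossCov d (fun x => f (R.transpose.mulVec x)) = R * crossCov d f * R.transpose := by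
  have hR' : Rᵀ * R = 1 := mul_eq_one_comm.mp hR
  have hmp := measurePreserving_mulVec R hR
  ext i j
  show (∫ x, x i * (partialLog (fun z => f (Rᵀ.mulVec z)) j x + x j) ∂stdGaussian d)
      = (R * crossCov d f * Rᵀ) i j
  have hemb : MeasurableEmbedding (R.mulVec : (Fin d → ℝ) → (Fin d → ℝ)) :=
    (mulVecEquiv R hR).measurableEmbedding
  rw [← hmp.integral_comp hemb
    (fun x => x i * (partialLog (fun z => f (Rᵀ.mulVec z)) j x + x j))]
  have hinv : ∀ y : Fin d → ℝ, Rᵀ.mulVec (R.mulVec y) = y := fun y => by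
    rw [Matrix.mulVec_mulVec, hR', Matrix.one_mulVec]
  have hintegrand : ∀ y : Fin d → ℝ,
      (R.mulVec y) i * (partialLog (fun z => f (Rᵀ.mulVec z)) j (R.mulVec y) + (R.mulVec y) j)
        = ∑ l, ∑ k, R i l * R j k * (y l * (partialLog f k y + y k)) := by
    intro y
    have h1 : partialLog (fun z => f (Rᵀ.mulVec z)) j (R.mulVec y)
        = ∑ k, R j k * partialLog f k y := by
      rw [partialLog_comp f hf_pos hf_smooth R j (R.mulVec y), hinv y]
    have h2 : ∀ i', (R.mulVec y) i' = ∑ k, R i' k * y k := by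
      intro i'; simp [Matrix.mulVec, dotProduct]
    rw [h1, h2 i, h2 j, ← Finset.sum_add_distrib]
    have h3 : ∀ k, R j k * partialLog f k y + R j k * y k
        = R j k * (partialLog f k y + y k) := fun k => by ring
    rw [Finset.sum_congr rfl fun k _ => h3 k, Finset.sum_mul_sum]
    refine Finset.sum_congr rfl fun l _ => Finset.sum_congr rfl fun k _ => by ring
  rw [integral_congr_ae (Filter.Eventually.of_forall hintegrand)]
  have hbase := integrable_base f hf_pos hf_smooth h_score_poly
  rw [integral_finset_sum _ fun l _ => integrable_finset_sum _ fun k _ =>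
    ((hbase l k).const_mul _)]
  have h4 : ∀ l, ∫ y, ∑ k, R i l * R j k * (y l * (partialLog f k y + y k)) ∂stdGaussian d
      = ∑ k, R i l * R j k * (crossCov d f l k) := by
    intro l
    rw [integral_finset_sum _ fun k _ => ((hbase l k).const_mul _)]
    exact Finset.sum_congr rfl fun k _ => integral_const_mul _ _
  rw [Finset.sum_congr rfl fun l _ => h4 l]
  have hrhs : (R * crossCov d f * Rᵀ) i j
      = ∑ l, ∑ k, R i l * R j k * (crossCov d f l k) := by
    rw [Matrix.mul_apply]
    simp_rw [Matrix.mul_apply, Finset.sum_mul]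
    rw [Finset.sum_comm]
    exact Finset.sum_congr rfl fun l _ => Finset.sum_congr rfl fun k _ => by
      rw [Matrix.transpose_apply]; ring
  rw [hrhs]
end

section
/- Let Σ ∈ ℝ^{d×d} be symmetric positive definite and p = N(0, Σ). Then the projected Fisher information of γ relative to p equals tI(γ, p) = Σ_{i=1}^d ((Σ^{-1})_{ii} − 1)², which coincides with Σ_{i=1}^d H(p)_{ii}²; i.e., the lower bound tI(γ,p) ≥ Σ_i H(p)_{ii}² holds with equality for centered Gaussian targets. -/
open MeasureTheory ProbabilityTheory Matrix Real Filter Set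
open scoped ENNReal NNReal


/-- The projected Fisher information `tI(γ, p)` of the standard Gaussian `γ` relative to the
target with density `f`:
`tI(γ, p) = ∑ i, ∫_ℝ (∫_{ℝ^{d-1}} (∂ᵢ log p(x) + x i) dγ_{-i}(x_{-i}))² dγ₁(x i)`.
The inner conditional expectation over `γ_{-i}` given `x i = t` is written as an integral over
the full Gaussian `γ` of the integrand with the `i`-th coordinate overwritten by `t`. -/
noncomputable def projFisher (d : ℕ) (f : (Fin d → ℝ) → ℝ) : ℝ :=
  ∑ i : Fin d, ∫ t : ℝ,
      (∫ y, (partialLog f i (Function.update y i t) + t) ∂(stdGaussian d)) ^ 2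
    ∂(ProbabilityTheory.gaussianReal 0 1)

/-- The density of the centered Gaussian `N(0, S)` on `ℝ^d`, for `S` positive definite. -/
noncomputable def gaussDensity {d : ℕ} (S : Matrix (Fin d) (Fin d) ℝ) (x : Fin d → ℝ) : ℝ :=
  Real.exp (-(1 / 2 : ℝ) * (x ⬝ᵥ S⁻¹.mulVec x)) / Real.sqrt ((2 * Real.pi) ^ d * S.det)



noncomputable def g1 : Measure ℝ := gaussianReal 0 1

lemma pdf_eq (x : ℝ) :
    gaussianPDFReal 0 1 x = (Real.sqrt (2 * π))⁻¹ * Real.exp (-(1/2) * x ^ 2) := by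
  simp only [gaussianPDFReal, NNReal.coe_one, mul_one, sub_zero]
  ring_nf

lemma integral_g1 (g : ℝ → ℝ) :
    ∫ x, g x ∂g1 = ∫ x, gaussianPDFReal 0 1 x * g x := by
  rw [g1, gaussianReal_of_var_ne_zero 0 one_ne_zero, gaussianPDF_def]
  rw [show (fun x => ENNReal.ofReal (gaussianPDFReal 0 1 x))
      = fun x => (((gaussianPDFReal 0 1 x).toNNReal : ℝ≥0) : ℝ≥0∞) from rfl]
  rw [integral_withDensity_eq_integral_smul
      (measurable_gaussianPDFReal 0 1).real_toNNReal g]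
  congr 1
  ext x
  rw [NNReal.smul_def, smul_eq_mul, Real.coe_toNNReal _ (gaussianPDFReal_nonneg 0 1 x)]

lemma integrable_g1_iff {g : ℝ → ℝ} :
    Integrable g g1 ↔ Integrable (fun x => gaussianPDFReal 0 1 x * g x) volume := by
  rw [g1, gaussianReal_of_var_ne_zero 0 one_ne_zero, gaussianPDF_def]
  rw [show (fun x => ENNReal.ofReal (gaussianPDFReal 0 1 x))
      = fun x => (((gaussianPDFReal 0 1 x).toNNReal : ℝ≥0) : ℝ≥0∞) from rfl]
  rw [integrable_withDensity_iff_integrable_smul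
      (measurable_gaussianPDFReal 0 1).real_toNNReal]
  constructor <;> intro h <;> refine h.congr (Filter.Eventually.of_forall fun x => ?_) <;>
    simp only [NNReal.smul_def, smul_eq_mul,
      Real.coe_toNNReal _ (gaussianPDFReal_nonneg 0 1 x)]

lemma integrable_id_g1 : Integrable (fun t : ℝ => t) g1 := by
  rw [integrable_g1_iff]
  have h : Integrable (fun x : ℝ => (Real.sqrt (2 * π))⁻¹ * (x * Real.exp (-(1/2) * x ^ 2))) volume :=
    (integrable_mul_exp_neg_mul_sq (by norm_num : (0:ℝ) < 1/2)).const_mul _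
  refine h.congr (Filter.Eventually.of_forall fun x => ?_)
  simp only [pdf_eq]; ring

lemma integrable_sq_g1 : Integrable (fun t : ℝ => t ^ 2) g1 := by
  rw [integrable_g1_iff]
  have h : Integrable (fun x : ℝ => x ^ 2 * Real.exp (-(1/2) * x ^ 2)) volume := by
    have := integrable_rpow_mul_exp_neg_mul_sq (by norm_num : (0:ℝ) < 1/2)
      (by norm_num : (-1:ℝ) < 2)
    have h2 : ∀ x : ℝ, x ^ (2:ℝ) = x ^ (2:ℕ) := fun x => by
      rw [show (2:ℝ) = ((2:ℕ):ℝ) by norm_num, Real.rpow_natCast]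
    refine this.congr (Filter.Eventually.of_forall fun x => ?_)
    simp only [h2]
  refine (h.const_mul ((Real.sqrt (2 * π))⁻¹)).congr (Filter.Eventually.of_forall fun x => ?_)
  simp only [pdf_eq]; ring

lemma integral_id_g1 : ∫ t, t ∂g1 = 0 := by
  have hmap : (gaussianReal 0 1).map ((-1 : ℝ) * ·) = gaussianReal 0 1 := by
    rw [gaussianReal_map_const_mul (-1 : ℝ)]
    norm_num
  have h2 := integral_map (μ := gaussianReal 0 1) (φ := fun x : ℝ => -1 * x)
    ((measurable_id.const_mul (-1:ℝ)).aemeasurable) (f := fun t : ℝ => t)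
    measurable_id.aestronglyMeasurable
  rw [hmap] at h2
  rw [MeasureTheory.integral_const_mul] at h2
  have : ∫ t, t ∂g1 = ∫ x, x ∂(gaussianReal 0 1) := rfl
  rw [this]
  linarith

lemma integrable_sq_kernel :
    Integrable (fun x : ℝ => x ^ 2 * Real.exp (-(1/2) * x ^ 2)) volume := by
  have := integrable_rpow_mul_exp_neg_mul_sq (by norm_num : (0:ℝ) < 1/2)
    (by norm_num : (-1:ℝ) < 2)
  have h2 : ∀ x : ℝ, x ^ (2:ℝ) = x ^ (2:ℕ) := fun x => by
    rw [show (2:ℝ) = ((2:ℕ):ℝ) by norm_num, Real.rpow_natCast]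
  refine this.congr (Filter.Eventually.of_forall fun x => ?_)
  simp only [h2]

lemma key_integral :
    ∫ x : ℝ, x ^ 2 * Real.exp (-(1/2) * x ^ 2) = Real.sqrt (2 * π) := by
  have hIe : Integrable (fun x : ℝ => Real.exp (-(1/2) * x ^ 2)) volume :=
    integrable_exp_neg_mul_sq (by norm_num : (0:ℝ) < 1/2)
  set f : ℝ → ℝ := fun x => x ^ 2 * Real.exp (-(1/2) * x ^ 2) with hf
  -- integration by parts on Ioi 0
  have hderiv : ∀ x : ℝ, HasDerivAt (fun y : ℝ => -y * Real.exp (-(1/2) * y ^ 2))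
      (f x - Real.exp (-(1/2) * x ^ 2)) x := by
    intro x
    have h1 : HasDerivAt (fun y : ℝ => -(1/2) * y ^ 2) (-(1/2) * (2 * x ^ 1)) x :=
      (hasDerivAt_pow 2 x).const_mul (-(1/2))
    have hexp := h1.exp
    have hid : HasDerivAt (fun y : ℝ => -y) (-1) x := (hasDerivAt_id x).neg
    have : HasDerivAt (fun y : ℝ => -y * Real.exp (-(1/2) * y ^ 2))
        (-1 * Real.exp (-(1/2) * x ^ 2) + -x * (Real.exp (-(1/2) * x ^ 2) * (-(1/2) * (2 * x ^ 1)))) x :=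
      hid.mul hexp
    convert this using 1
    simp only [hf]
    push_cast
    ring
  have htend : Filter.Tendsto (fun y : ℝ => -y * Real.exp (-(1/2) * y ^ 2))
      Filter.atTop (nhds 0) := by
    have hlo := rpow_mul_exp_neg_mul_sq_isLittleO_exp_neg
      (by norm_num : (0:ℝ) < 1/2) 1
    have g0 : Filter.Tendsto (fun x : ℝ => Real.exp (-(1/2) * x)) Filter.atTop (nhds 0) := by
      refine Filter.Tendsto.congr (f₁ := fun x : ℝ => Real.exp (-(x/2))) (fun x => by ring_nf) ?_
      exact Real.tendsto_exp_neg_atTop_nhds_zero.comp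
        (Filter.tendsto_id.atTop_div_const (by norm_num))
    have h0 := hlo.trans_tendsto g0
    have h0' : Filter.Tendsto (fun x : ℝ => x * Real.exp (-(1/2) * x ^ 2))
        Filter.atTop (nhds 0) := by
      refine h0.congr fun x => ?_
      rw [Real.rpow_one]
    simpa [neg_mul] using h0'.neg
  have f'int : MeasureTheory.IntegrableOn
      (fun x : ℝ => f x - Real.exp (-(1/2) * x ^ 2)) (Set.Ioi 0) volume :=
    (integrable_sq_kernel.sub hIe).integrableOn
  have parts := MeasureTheory.integral_Ioi_of_hasDerivAt_of_tendsto'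
    (a := 0) (fun x _ => hderiv x) f'int htend
  simp only [neg_zero, zero_mul, sub_zero, zero_pow, mul_zero, Real.exp_zero] at parts
  -- parts : ∫ x in Ioi 0, (f x - exp(..)) = 0 - (-0 * 1) = 0
  have hsplit : ∫ x in Set.Ioi (0:ℝ), (f x - Real.exp (-(1/2) * x ^ 2))
      = (∫ x in Set.Ioi (0:ℝ), f x) - ∫ x in Set.Ioi (0:ℝ), Real.exp (-(1/2) * x ^ 2) :=
    MeasureTheory.integral_sub integrable_sq_kernel.integrableOn hIe.integrableOn
  have hIoi_e : ∫ x in Set.Ioi (0:ℝ), Real.exp (-(1/2) * x ^ 2) = Real.sqrt (2*π) / 2 := by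
    have := integral_gaussian_Ioi (1/2)
    rw [show Real.sqrt (π / (1/2)) = Real.sqrt (2*π) by rw [show π / (1/2) = 2*π by ring]]
      at this
    simpa using this
  have hIoi_f : ∫ x in Set.Ioi (0:ℝ), f x = Real.sqrt (2*π) / 2 := by
    rw [hsplit, hIoi_e] at parts
    linarith
  have heven : ∫ x : ℝ, f x = 2 * ∫ x in Set.Ioi (0:ℝ), f x := by
    rw [← integral_comp_abs (f := f)]
    congr 1
    ext x
    simp only [hf, sq_abs]
  rw [heven, hIoi_f]
  ring

lemma integral_sq_g1 : ∫ t, t ^ 2 ∂g1 = 1 := by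
  rw [integral_g1]
  have : ∫ x : ℝ, gaussianPDFReal 0 1 x * x ^ 2
      = (Real.sqrt (2*π))⁻¹ * ∫ x : ℝ, x ^ 2 * Real.exp (-(1/2) * x ^ 2) := by
    rw [← MeasureTheory.integral_const_mul]
    congr 1
    ext x
    simp only [pdf_eq]
    ring
  rw [this, key_integral]
  have hpos : (0:ℝ) < Real.sqrt (2*π) := Real.sqrt_pos.mpr (by positivity)
  field_simp

instance : IsProbabilityMeasure g1 := by unfold g1; infer_instance

instance (d : ℕ) : IsProbabilityMeasure (stdGaussian d) := by
  unfold _root_.stdGaussian; infer_instance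

lemma integral_prod_g {d : ℕ} (g : Fin d → ℝ → ℝ) :
    ∫ x, ∏ i, g i (x i) ∂(stdGaussian d) = ∏ i, ∫ t, g i t ∂g1 := by
  letI : MeasureSpace ℝ := ⟨g1⟩
  haveI : SigmaFinite (volume : Measure ℝ) := inferInstanceAs (SigmaFinite g1)
  exact MeasureTheory.integral_fintype_prod_eq_prod (μ := fun _ => g1) g

lemma integrable_prod_g {d : ℕ} (g : Fin d → ℝ → ℝ) (hg : ∀ i, Integrable (g i) g1) :
    Integrable (fun x : Fin d → ℝ => ∏ i, g i (x i)) (stdGaussian d) := by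
  letI : MeasureSpace ℝ := ⟨g1⟩
  haveI : SigmaFinite (volume : Measure ℝ) := inferInstanceAs (SigmaFinite g1)
  exact MeasureTheory.Integrable.fintype_prod hg

lemma coord_eq_prod {d : ℕ} (i : Fin d) (x : Fin d → ℝ) :
    (∏ j, (if j = i then (fun t : ℝ => t) else fun _ => 1) (x j)) = x i := by
  rw [Finset.prod_eq_single i (fun b _ hb => by simp [hb]) (by simp)]
  simp

lemma integrable_coord {d : ℕ} (i : Fin d) :
    Integrable (fun x : Fin d → ℝ => x i) (stdGaussian d) := by
  have h := integrable_prod_g (fun j => if j = i then (fun t : ℝ => t) else fun _ => 1)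
    (fun j => by
      by_cases hj : j = i
      · simpa [hj] using integrable_id_g1
      · simpa [hj] using (integrable_const (1:ℝ) (μ := g1)))
  simpa only [coord_eq_prod] using h

lemma integral_coord {d : ℕ} (i : Fin d) : ∫ x, x i ∂(stdGaussian d) = 0 := by
  have h := integral_prod_g (fun j => if j = i then (fun t : ℝ => t) else fun _ => 1)
  simp only [coord_eq_prod] at h
  rw [h]
  exact Finset.prod_eq_zero (Finset.mem_univ i) (by simp [integral_id_g1])

lemma coordsq_eq_prod {d : ℕ} (i : Fin d) (x : Fin d → ℝ) :
    (∏ j, (if j = i then (fun t : ℝ => t ^ 2) else fun _ => 1) (x j)) = x i * x i := by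
  rw [Finset.prod_eq_single i (fun b _ hb => by simp [hb]) (by simp)]
  simp [sq]

lemma coordmul_eq_prod {d : ℕ} {i k : Fin d} (hik : i ≠ k) (x : Fin d → ℝ) :
    (∏ j, (if j = i then (fun t : ℝ => t) else if j = k then (fun t : ℝ => t)
      else fun _ => 1) (x j)) = x i * x k := by
  rw [← Finset.mul_prod_erase Finset.univ _ (Finset.mem_univ i),
    ← Finset.mul_prod_erase _ _ (Finset.mem_erase.mpr ⟨Ne.symm hik, Finset.mem_univ k⟩),
    Finset.prod_eq_one (fun j hj => by
      simp only [Finset.mem_erase] at hj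
      simp [hj.1, hj.2.1])]
  simp [hik.symm, hik]

lemma integrable_coord_mul {d : ℕ} (i k : Fin d) :
    Integrable (fun x : Fin d → ℝ => x i * x k) (stdGaussian d) := by
  by_cases hik : i = k
  · subst hik
    have h := integrable_prod_g (fun j => if j = i then (fun t : ℝ => t ^ 2) else fun _ => 1)
      (fun j => by
        by_cases hj : j = i
        · simpa [hj] using integrable_sq_g1
        · simpa [hj] using (integrable_const (1:ℝ) (μ := g1)))
    simpa only [coordsq_eq_prod] using h
  · have h := integrable_prod_g (fun j => if j = i then (fun t : ℝ => t)
        else if j = k then (fun t : ℝ => t) else fun _ => 1)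
      (fun j => by
        by_cases hj : j = i
        · simpa [hj] using integrable_id_g1
        · by_cases hj' : j = k
          · simpa [hj, hj'] using integrable_id_g1
          · simpa [hj, hj'] using (integrable_const (1:ℝ) (μ := g1)))
    have := fun x => coordmul_eq_prod hik x
    simpa only [this] using h

lemma integral_coord_mul {d : ℕ} (i k : Fin d) :
    ∫ x, x i * x k ∂(stdGaussian d) = if i = k then 1 else 0 := by
  by_cases hik : i = k
  · subst hik
    simp only [if_pos rfl]
    have h := integral_prod_g (fun j => if j = i then (fun t : ℝ => t ^ 2) else fun _ => 1)
    simp only [coordsq_eq_prod] at h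
    rw [h, Finset.prod_eq_single i (fun b _ hb => by simp [hb]) (by simp)]
    simp [integral_sq_g1]
  · simp only [if_neg hik]
    have h := integral_prod_g (fun j => if j = i then (fun t : ℝ => t)
        else if j = k then (fun t : ℝ => t) else fun _ => 1)
    have hc := fun x => coordmul_eq_prod hik x
    simp only [hc] at h
    rw [h]
    exact Finset.prod_eq_zero (Finset.mem_univ i) (by simp [integral_id_g1])

lemma partialLog_gauss {d : ℕ} (S : Matrix (Fin d) (Fin d) ℝ) (hS : S.PosDef)
    (i : Fin d) (x : Fin d → ℝ) :
    partialLog (gaussDensity S) i x = -(S⁻¹.mulVec x) i := by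
  set A := S⁻¹ with hAdef
  have hA : ∀ p q, A q p = A p q := fun p q => hS.isHermitian.inv.apply p q
  have hcpos : (0:ℝ) < Real.sqrt ((2 * π) ^ d * S.det) :=
    Real.sqrt_pos.mpr (by have := hS.det_pos; positivity)
  have hlog : (fun z => Real.log (gaussDensity S z))
      = fun z => -(1/2) * (∑ p, ∑ q, z p * (A p q * z q))
          - Real.log (Real.sqrt ((2 * π) ^ d * S.det)) := by
    funext z
    rw [gaussDensity, Real.log_div (Real.exp_ne_zero _) hcpos.ne', Real.log_exp]
    congr 2
    simp [dotProduct, Matrix.mulVec, Finset.mul_sum, hAdef]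
  have hQ : HasFDerivAt (fun z : Fin d → ℝ => ∑ p, ∑ q, z p * (A p q * z q))
      (∑ p : Fin d, ∑ q : Fin d,
        (x p • (A p q • ContinuousLinearMap.proj q)
          + (A p q * x q) • (ContinuousLinearMap.proj p : (Fin d → ℝ) →L[ℝ] ℝ))) x := by
    apply HasFDerivAt.fun_sum
    intro p _
    apply HasFDerivAt.fun_sum
    intro q _
    exact (hasFDerivAt_apply p x).mul ((hasFDerivAt_apply q x).const_mul (A p q))
  have HF := (hQ.const_mul (-(1/2) : ℝ)).sub_const
    (Real.log (Real.sqrt ((2 * π) ^ d * S.det)))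
  rw [partialLog, hlog, HF.fderiv]
  simp only [ContinuousLinearMap.coe_smul', Pi.smul_apply, ContinuousLinearMap.coe_sum',
    Finset.sum_apply, ContinuousLinearMap.add_apply, ContinuousLinearMap.smul_apply,
    ContinuousLinearMap.proj_apply, Pi.single_apply, smul_eq_mul, mul_ite, mul_one, mul_zero,
    ite_mul, zero_mul, Finset.sum_ite_eq', Finset.mem_univ, if_true,
    Finset.sum_add_distrib]
  have h2 : ∀ p, (∑ q, if p = i then A p q * x q else 0)
      = if p = i then ∑ q, A p q * x q else 0 := fun p => by split <;> simp
  simp only [h2, Finset.sum_ite_eq', Finset.mem_univ, if_true]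
  rw [Finset.sum_congr rfl (fun p (_ : p ∈ Finset.univ) => mul_comm (x p) (A p i))]
  rw [Finset.sum_congr rfl (fun p (_ : p ∈ Finset.univ) => by rw [← hA p i])]
  rw [Matrix.mulVec]
  simp only [dotProduct]
  ring

lemma crossCov_diag {d : ℕ} (Sig : Matrix (Fin d) (Fin d) ℝ) (hSig : Sig.PosDef) (i : Fin d) :
    crossCov d (gaussDensity Sig) i i = 1 - Sig⁻¹ i i := by
  have hAdef : True := trivial
  rw [crossCov, Matrix.of_apply]
  have hint : (fun x : Fin d → ℝ => x i * (partialLog (gaussDensity Sig) i x + x i))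
      = fun x => x i * x i - ∑ k, Sig⁻¹ i k * (x i * x k) := by
    funext x
    rw [partialLog_gauss Sig hSig, Matrix.mulVec]
    simp only [dotProduct]
    have hs : ∑ k, Sig⁻¹ i k * (x i * x k) = x i * ∑ k, Sig⁻¹ i k * x k := by
      rw [Finset.mul_sum]
      exact Finset.sum_congr rfl (fun k _ => by ring)
    rw [hs]
    ring
  rw [hint]
  rw [MeasureTheory.integral_sub (integrable_coord_mul i i)
    (MeasureTheory.integrable_finset_sum _
      (fun k _ => ((integrable_coord_mul i k).const_mul (Sig⁻¹ i k))))]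
  rw [MeasureTheory.integral_finset_sum _
    (fun k _ => ((integrable_coord_mul i k).const_mul (Sig⁻¹ i k)))]
  simp only [MeasureTheory.integral_const_mul, integral_coord_mul]
  simp [Finset.sum_ite_eq, mul_ite]

lemma inner_int {d : ℕ} (Sig : Matrix (Fin d) (Fin d) ℝ) (hSig : Sig.PosDef)
    (i : Fin d) (t : ℝ) :
    ∫ y, (partialLog (gaussDensity Sig) i (Function.update y i t) + t) ∂(stdGaussian d)
      = (1 - Sig⁻¹ i i) * t := by
  have hint : (fun y : Fin d → ℝ =>
        partialLog (gaussDensity Sig) i (Function.update y i t) + t)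
      = fun y => (1 - Sig⁻¹ i i) * t - ∑ j, (if j = i then 0 else Sig⁻¹ i j) * y j := by
    funext y
    rw [partialLog_gauss Sig hSig, Matrix.mulVec]
    simp only [dotProduct]
    rw [Finset.sum_congr rfl (fun j (_ : j ∈ Finset.univ) => by
      show Sig⁻¹ i j * Function.update y i t j
        = (if j = i then Sig⁻¹ i i * t else 0) + (if j = i then 0 else Sig⁻¹ i j) * y j
      by_cases hj : j = i
      · subst hj; simp [Function.update_self]
      · simp [Function.update_of_ne hj, hj])]
    simp only [Finset.sum_add_distrib, Finset.sum_ite_eq', Finset.mem_univ, if_true]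
    ring
  rw [hint]
  rw [MeasureTheory.integral_sub (MeasureTheory.integrable_const _)
    (MeasureTheory.integrable_finset_sum _
      (fun j _ => ((integrable_coord j).const_mul _)))]
  rw [MeasureTheory.integral_finset_sum _
    (fun j _ => ((integrable_coord j).const_mul _))]
  rw [Finset.sum_eq_zero (fun j _ => by
    rw [MeasureTheory.integral_const_mul, integral_coord]; ring)]
  simp [measure_univ]

/-- Let `Σ` be symmetric positive definite and `p = N(0, Σ)`.  Then the
projected Fisher information of `γ` relative to `p` equals
`tI(γ, p) = ∑ i, ((Σ⁻¹) i i − 1)²`, which coincides with `∑ i, (H(p) i i)²`; i.e. the lower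
bound `tI(γ, p) ≥ ∑ i, (H(p) i i)²` holds with equality for centered Gaussian targets. -/
theorem projFisher_gaussian_eq_diag_square_sum
    {d : ℕ} (Sig : Matrix (Fin d) (Fin d) ℝ) (hSig : Sig.PosDef) :
    projFisher d (gaussDensity Sig) = ∑ i, ((Sig⁻¹ i i) - 1) ^ 2 ∧
    projFisher d (gaussDensity Sig) = ∑ i, (crossCov d (gaussDensity Sig) i i) ^ 2 := by
  have hmain : projFisher d (gaussDensity Sig) = ∑ i, ((Sig⁻¹ i i) - 1) ^ 2 := by
    rw [projFisher]
    refine Finset.sum_congr rfl (fun i _ => ?_)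
    rw [show (ProbabilityTheory.gaussianReal 0 1 : Measure ℝ) = g1 from rfl]
    have : (fun t : ℝ => (∫ y, (partialLog (gaussDensity Sig) i (Function.update y i t) + t)
        ∂(stdGaussian d)) ^ 2) = fun t : ℝ => (1 - Sig⁻¹ i i) ^ 2 * t ^ 2 := by
      funext t
      rw [inner_int Sig hSig i t, mul_pow]
    rw [this, MeasureTheory.integral_const_mul, integral_sq_g1]
    ring
  refine ⟨hmain, ?_⟩
  rw [hmain]
  refine Finset.sum_congr rfl (fun i _ => ?_)
  rw [crossCov_diag Sig hSig i]
  ring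
end

section
/- Let d ≥ 1, let ν_1, …, ν_d > 0 satisfy Σ_{i=1}^d ν_i = d, and suppose max_i ν_i / min_i ν_i ≤ κ. If R is distributed according to the Haar probability measure on the orthogonal group O(d), then E_R[ Σ_{i=1}^d log( Σ_{j=1}^d R_{ij}² ν_j ) ] ≤ (2/((d+2)κ²)) Σ_{i=1}^d log ν_i. -/
open Real

private lemma hasDeriv_gen (p q r : ℝ) {t : ℝ} (ht : t ≠ 0) :
    HasDerivAt (fun t : ℝ => p*t + q*Real.log t + r*(t-1)^2 ) (p + q/t + r*(2*(t-1))) t := by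
  have h1 : HasDerivAt (fun t : ℝ => p*t) p t := by
    simpa using (hasDerivAt_id t).const_mul p
  have h2 : HasDerivAt (fun t : ℝ => q*Real.log t) (q * t⁻¹) t :=
    (Real.hasDerivAt_log ht).const_mul q
  have h3 : HasDerivAt (fun t : ℝ => r*(t-1)^2) (r * (2*(t-1))) t := by
    have := (((hasDerivAt_id t).sub_const 1).pow 2).const_mul r
    simpa [mul_comm, mul_assoc] using this
  have := (h1.add h2).add h3
  simpa [div_eq_mul_inv, Pi.add_def] using this

private lemma contOn_gen (p q r : ℝ) {s : Set ℝ} (hs : ∀ x ∈ s, x ≠ 0) :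
    ContinuousOn (fun t : ℝ => p*t + q*Real.log t + r*(t-1)^2) s := by
  refine (((continuousOn_id.const_smul p).add
    ((Real.continuousOn_log.mono ?_).const_smul q)).add ?_)
  · intro x hx; exact hs x hx
  · exact Continuous.continuousOn (by continuity)

/-- generic monotone helper: value at right endpoint b, g nondecreasing -/
private lemma ge_left_of_deriv_nonpos (p q r a b : ℝ) (ha : 0 < a) (hab : a ≤ b)
    (hd : ∀ t ∈ Set.Ioo a b, p + q/t + r*(2*(t-1)) ≤ 0) {x : ℝ} (hx : x ∈ Set.Icc a b) :
    (fun t : ℝ => p*t + q*Real.log t + r*(t-1)^2) b ≤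
    (fun t : ℝ => p*t + q*Real.log t + r*(t-1)^2) x := by
  have hne : ∀ y ∈ Set.Icc a b, y ≠ 0 := fun y hy => ne_of_gt (lt_of_lt_of_le ha hy.1)
  have hint : interior (Set.Icc a b) = Set.Ioo a b := interior_Icc
  have := antitoneOn_of_deriv_nonpos (convex_Icc a b) (contOn_gen p q r hne)
    (fun t ht => by
      rw [hint] at ht
      exact (hasDeriv_gen p q r (ne_of_gt (lt_trans ha ht.1))).differentiableAt.differentiableWithinAt)
    (fun t ht => by
      rw [hint] at ht
      rw [(hasDeriv_gen p q r (ne_of_gt (lt_trans ha ht.1))).deriv]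
      exact hd t ht)
  exact this hx (Set.right_mem_Icc.2 (le_trans hx.1 hx.2)) hx.2

private lemma le_right_of_deriv_nonneg (p q r a b : ℝ) (ha : 0 < a) (hab : a ≤ b)
    (hd : ∀ t ∈ Set.Ioo a b, 0 ≤ p + q/t + r*(2*(t-1))) {x : ℝ} (hx : x ∈ Set.Icc a b) :
    (fun t : ℝ => p*t + q*Real.log t + r*(t-1)^2) x ≤
    (fun t : ℝ => p*t + q*Real.log t + r*(t-1)^2) b := by
  have hne : ∀ y ∈ Set.Icc a b, y ≠ 0 := fun y hy => ne_of_gt (lt_of_lt_of_le ha hy.1)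
  have hint : interior (Set.Icc a b) = Set.Ioo a b := interior_Icc
  have := monotoneOn_of_deriv_nonneg (convex_Icc a b) (contOn_gen p q r hne)
    (fun t ht => by
      rw [hint] at ht
      exact (hasDeriv_gen p q r (ne_of_gt (lt_trans ha ht.1))).differentiableAt.differentiableWithinAt)
    (fun t ht => by
      rw [hint] at ht
      rw [(hasDeriv_gen p q r (ne_of_gt (lt_trans ha ht.1))).deriv]
      exact hd t ht)
  exact this hx (Set.right_mem_Icc.2 (le_trans hx.1 hx.2)) hx.2

-- Ineq A
lemma logA {x c : ℝ} (hx : 0 < x) (hc : 1 ≤ c) (hxc : x ≤ c) :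
    Real.log x ≤ (x - 1) - (x - 1)^2 / (2 * c^2) := by
  have hc0 : (0:ℝ) < c := lt_of_lt_of_le one_pos hc
  have hc2 : (1:ℝ) ≤ c^2 := by nlinarith
  have hdiv : (x-1)^2/(2*c^2) ≤ (x-1)^2/2 :=
    div_le_div_of_nonneg_left (sq_nonneg _) (by norm_num) (by nlinarith)
  rcases le_total x 1 with h1 | h1
  · have key := ge_left_of_deriv_nonpos 1 (-1) (-(1/2)) x 1 hx h1
      (fun t ht => by
        have ht0 : 0 < t := lt_trans hx ht.1
        have : (1:ℝ) + -1/t + -(1/2)*(2*(t-1)) = -((t-1)^2)/t := by field_simp; ring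
        rw [this]
        exact div_nonpos_of_nonpos_of_nonneg (neg_nonpos.2 (sq_nonneg _)) ht0.le)
      (Set.mem_Icc.2 ⟨le_refl x, h1⟩)
    simp only [Real.log_one] at key
    linarith
  · -- x ∈ [1,c]; h(t)=t-1-log t-(t-1)^2/(2c) monotone↑ ... need h(x) ≥ h(1)=0.
    -- use le_right... with antitone of negative? use g := -h: p=-1, q=1, r=1/(2c), g(x) ≤ g(1)?? g decreasing?
    -- h' = 1 - 1/t - (t-1)/c ≥ 0 on [1,c]. So -h has deriv ≤ 0, -h antitone: -h(x) ≤ -h(1)=... 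
    -- ge_left gives value at RIGHT endpoint ≤ value at x; take interval [1,x], function -h: (-h)(x) ≤ (-h)(1)
    have key := ge_left_of_deriv_nonpos (-1) 1 (1/(2*c)) 1 x one_pos h1
      (fun t ht => by
        have ht1 : 1 ≤ t := ht.1.le
        have htc : t ≤ c := le_trans ht.2.le hxc
        have ht0 : 0 < t := lt_of_lt_of_le one_pos ht1
        have : (-1:ℝ) + 1/t + 1/(2*c)*(2*(t-1)) = -((t-1)*(1/t - 1/c)) := by
          field_simp; ring
        rw [this]
        have h1t : 1/c ≤ 1/t := by gcongr
        nlinarith)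
      (Set.mem_Icc.2 ⟨le_refl 1, h1⟩)
    simp only [Real.log_one] at key
    -- key : -x + log x + (x-1)^2/(2c) ≤ -1 + 0 + 0
    have hcc : (x-1)^2/(2*c^2) ≤ (x-1)^2/(2*c) :=
      div_le_div_of_nonneg_left (sq_nonneg _) (by positivity) (by nlinarith)
    have hexp : 1/(2*c)*(x-1)^2 = (x-1)^2/(2*c) := by ring
    linarith [key]

-- Ineq B : for 0 < m ≤ 1, m ≤ x : x - 1 - log x ≤ (x-1)^2/(2 m^2)
lemma logB {x m : ℝ} (hm : 0 < m) (hm1 : m ≤ 1) (hx : m ≤ x) :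
    x - 1 - Real.log x ≤ (x - 1)^2 / (2 * m^2) := by
  have hm2 : m^2 ≤ 1 := by nlinarith
  have hm2' : (0:ℝ) < m^2 := by positivity
  rcases le_total x 1 with h1 | h1
  · -- φ(t) = (t-1)^2/(2m) - t + log t antitone? φ' = (t-1)/m - 1 + 1/t = (1-t)(1/t - 1/m)... 
    -- φ = p*t+q*log t+r*(t-1)^2 with p=-1,q=1,r=1/(2m). φ' = -1+1/t+(t-1)/m.
    -- φ' = (1-t)/t - (1-t)/m = (1-t)(1/t - 1/m) ≥ 0 since t ≤ ... t ≥ m ⇒ 1/t ≤ 1/m ⇒ φ' ≤ 0. ✓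
    have key := ge_left_of_deriv_nonpos (-1) 1 (1/(2*m)) x 1 (lt_of_lt_of_le hm hx) h1
      (fun t ht => by
        have htm : m ≤ t := le_trans hx ht.1.le
        have ht0 : 0 < t := lt_of_lt_of_le hm htm
        have h1t : t ≤ 1 := ht.2.le
        have : (-1:ℝ) + 1/t + 1/(2*m)*(2*(t-1)) = (1-t)*(1/t - 1/m) := by
          field_simp; ring
        rw [this]
        have : 1/t ≤ 1/m := by gcongr
        nlinarith)
      (Set.mem_Icc.2 ⟨le_refl x, h1⟩)
    simp only [Real.log_one] at key
    -- key: -1 ≤ -x + log x + (x-1)^2/(2m)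
    have h2 : (x-1)^2/(2*m) ≤ (x-1)^2/(2*m^2) :=
      div_le_div_of_nonneg_left (sq_nonneg _) (by positivity) (by nlinarith)
    have hform : 1/(2*m)*(x-1)^2 = (x-1)^2/(2*m) := by ring
    nlinarith [key]
  · -- x ≥ 1: ψ(t) = (t-1)^2/2 - t + 1 + log t ≥ 0 increasing: p=-1,q=1,r=1/2, ψ(1) ≤ ψ(x)
    have key := le_right_of_deriv_nonneg (-1) 1 (1/2) 1 x one_pos h1
      (fun t ht => by
        have ht0 : 0 < t := lt_trans one_pos ht.1
        have : (-1:ℝ) + 1/t + 1/2*(2*(t-1)) = (t-1)^2/t := by field_simp; ring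
        rw [this]
        positivity)
      (Set.mem_Icc.2 ⟨le_refl 1, h1⟩)
    simp only [Real.log_one] at key
    have h2 : (x-1)^2/2 ≤ (x-1)^2/(2*m^2) :=
      div_le_div_of_nonneg_left (sq_nonneg _) (by positivity) (by nlinarith)
    have hform : 1/2*(x-1)^2 = (x-1)^2/2 := by ring
    nlinarith [key]

open MeasureTheory Matrix

/-- Matrices carry the product σ-algebra. -/
instance matrixMeasurableSpace {m n α : Type*} [MeasurableSpace α] :
    MeasurableSpace (Matrix m n α) :=
  inferInstanceAs (MeasurableSpace (m → n → α))

section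
variable {d : ℕ}

private lemma sum_two_ite {i₀ i₁ : Fin d} (h01 : i₀ ≠ i₁) (a b : ℝ) (v : Fin d → ℝ) :
    ∑ k, (if k = i₀ then a else if k = i₁ then b else 0) * v k = a * v i₀ + b * v i₁ := by
  have key : ∀ k : Fin d, (if k = i₀ then a else if k = i₁ then b else 0) * v k
      = (if k = i₀ then a * v i₀ else 0) + (if k = i₁ then b * v i₁ else 0) := by
    intro k
    by_cases h0 : k = i₀
    · subst h0; simp [h01, Ne.symm h01]
    · by_cases h1 : k = i₁ <;> simp_all
  rw [Finset.sum_congr rfl fun k _ => key k, Finset.sum_add_distrib,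
    Finset.sum_ite_eq' Finset.univ i₀ (fun _ => a * v i₀),
    Finset.sum_ite_eq' Finset.univ i₁ (fun _ => b * v i₁)]
  simp

private lemma sum_one_ite (i : Fin d) (v : Fin d → ℝ) :
    ∑ k, (if k = i then (1:ℝ) else 0) * v k = v i := by
  have key : ∀ k : Fin d, (if k = i then (1:ℝ) else 0) * v k
      = (if k = i then v i else 0) := by
    intro k; by_cases h : k = i <;> simp_all
  rw [Finset.sum_congr rfl fun k _ => key k, Finset.sum_ite_eq' Finset.univ i (fun _ => v i)]
  simp

private def permM (σ : Equiv.Perm (Fin d)) : Matrix (Fin d) (Fin d) ℝ :=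
  Matrix.of fun i k => if k = σ i then (1:ℝ) else 0

private lemma permM_orth (σ : Equiv.Perm (Fin d)) : permM σ * (permM σ)ᵀ = 1 := by
  ext i i'
  simp only [Matrix.mul_apply, Matrix.transpose_apply, permM, Matrix.of_apply, Matrix.one_apply]
  rw [sum_one_ite (σ i) (fun k => if k = σ i' then (1:ℝ) else 0)]
  by_cases h : i = i'
  · subst h; simp
  · simp [h, fun hc => h (σ.injective hc)]

private lemma permM_apply (σ : Equiv.Perm (Fin d)) (R : Matrix (Fin d) (Fin d) ℝ) (i j : Fin d) :
    (permM σ * R) i j = R (σ i) j := by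
  simp only [Matrix.mul_apply, permM, Matrix.of_apply]
  exact sum_one_ite (σ i) (fun k => R k j)

private def flipM (i₁ : Fin d) : Matrix (Fin d) (Fin d) ℝ :=
  Matrix.diagonal (fun k => if k = i₁ then (-1:ℝ) else 1)

private lemma flipM_orth (i₁ : Fin d) : flipM i₁ * (flipM i₁)ᵀ = 1 := by
  simp only [flipM, Matrix.diagonal_transpose, Matrix.diagonal_mul_diagonal]
  convert Matrix.diagonal_one with k
  by_cases h : k = i₁ <;> simp [h]

private lemma flipM_apply (i₁ : Fin d) (R : Matrix (Fin d) (Fin d) ℝ) (i j : Fin d) :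
    (flipM i₁ * R) i j = (if i = i₁ then -1 else 1) * R i j := by
  simp [flipM, Matrix.diagonal_mul]

private noncomputable def rotM (i₀ i₁ : Fin d) : Matrix (Fin d) (Fin d) ℝ :=
  Matrix.of fun i k =>
    if i = i₀ then (if k = i₀ then (Real.sqrt 2)⁻¹ else if k = i₁ then -(Real.sqrt 2)⁻¹ else 0)
    else if i = i₁ then (if k = i₀ then (Real.sqrt 2)⁻¹ else if k = i₁ then (Real.sqrt 2)⁻¹ else 0)
    else if k = i then 1 else 0

private lemma sqrt2_sq : (Real.sqrt 2)⁻¹ * (Real.sqrt 2)⁻¹ = 1/2 := by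
  rw [← mul_inv, ← Real.sqrt_mul_self (by norm_num : (0:ℝ) ≤ 2)]
  norm_num

private lemma rot_row_dot {i₀ i₁ : Fin d} (h01 : i₀ ≠ i₁) (i : Fin d) (v : Fin d → ℝ) :
    ∑ k, rotM i₀ i₁ i k * v k =
      if i = i₀ then (Real.sqrt 2)⁻¹ * v i₀ + (-(Real.sqrt 2)⁻¹) * v i₁
      else if i = i₁ then (Real.sqrt 2)⁻¹ * v i₀ + (Real.sqrt 2)⁻¹ * v i₁
      else v i := by
  by_cases h0 : i = i₀
  · subst h0
    simp only [rotM, Matrix.of_apply, eq_self_iff_true, if_true]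
    rw [sum_two_ite h01]
  · by_cases h1 : i = i₁
    · subst h1
      simp only [rotM, Matrix.of_apply, if_neg h0, eq_self_iff_true, if_true]
      rw [sum_two_ite h01]
    · simp only [rotM, Matrix.of_apply, if_neg h0, if_neg h1]
      rw [sum_one_ite i v]

private lemma rotM_entry {i₀ i₁ : Fin d} (i k : Fin d) : rotM i₀ i₁ i k =
    if i = i₀ then (if k = i₀ then (Real.sqrt 2)⁻¹ else if k = i₁ then -(Real.sqrt 2)⁻¹ else 0)
    else if i = i₁ then (if k = i₀ then (Real.sqrt 2)⁻¹ else if k = i₁ then (Real.sqrt 2)⁻¹ else 0)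
    else if k = i then 1 else 0 := rfl

private lemma rotM_orth {i₀ i₁ : Fin d} (h01 : i₀ ≠ i₁) : rotM i₀ i₁ * (rotM i₀ i₁)ᵀ = 1 := by
  ext i i'
  simp only [Matrix.mul_apply, Matrix.transpose_apply]
  rw [rot_row_dot h01 i (fun k => rotM i₀ i₁ i' k)]
  rw [Matrix.one_apply]
  by_cases h0 : i = i₀ <;> by_cases h1 : i = i₁ <;>
    by_cases h0' : i' = i₀ <;> by_cases h1' : i' = i₁ <;>
    simp_all [rotM_entry, sqrt2_sq, Ne.symm] <;> norm_num

private lemma rotM_apply {i₀ i₁ : Fin d} (h01 : i₀ ≠ i₁) (R : Matrix (Fin d) (Fin d) ℝ)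
    (i j : Fin d) : (rotM i₀ i₁ * R) i j =
      if i = i₀ then (Real.sqrt 2)⁻¹ * (R i₀ j - R i₁ j)
      else if i = i₁ then (Real.sqrt 2)⁻¹ * (R i₀ j + R i₁ j)
      else R i j := by
  simp only [Matrix.mul_apply]
  rw [rot_row_dot h01 i (fun k => R k j)]
  by_cases h0 : i = i₀ <;> by_cases h1 : i = i₁ <;> simp_all <;> ring

end

section Meas
variable {d : ℕ}

private lemma measurable_entry (i j : Fin d) :
    Measurable (fun R : Matrix (Fin d) (Fin d) ℝ => R i j) :=
  (measurable_pi_apply j).comp (measurable_pi_apply i)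

private lemma measurable_mulQ (Q : Matrix (Fin d) (Fin d) ℝ) :
    Measurable (fun R : Matrix (Fin d) (Fin d) ℝ => Q * R) := by
  apply measurable_pi_lambda
  intro i
  apply measurable_pi_lambda
  intro j
  simp only [Matrix.mul_apply]
  exact Finset.measurable_sum _ fun k _ => ((measurable_entry k j).const_mul _)

variable (μ : Measure (Matrix (Fin d) (Fin d) ℝ)) [IsProbabilityMeasure μ]

private lemma integral_comp
    (hinv : ∀ Q : Matrix (Fin d) (Fin d) ℝ, Q * Q.transpose = 1 →
      μ.map (fun R => Q * R) = μ)
    (Q : Matrix (Fin d) (Fin d) ℝ) (hQ : Q * Q.transpose = 1)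
    (f : Matrix (Fin d) (Fin d) ℝ → ℝ) (hf : Measurable f) :
    ∫ R, f (Q * R) ∂μ = ∫ R, f R ∂μ := by
  conv_rhs => rw [← hinv Q hQ]
  rw [integral_map (measurable_mulQ Q).aemeasurable]
  exact hf.aestronglyMeasurable

private lemma entry_abs_le {R : Matrix (Fin d) (Fin d) ℝ} (h : R * R.transpose = 1)
    (i j : Fin d) : |R i j| ≤ 1 := by
  have hrow : ∑ k, (R i k)^2 = 1 := by
    have := congrFun (congrFun h i) i
    simp only [Matrix.mul_apply, Matrix.transpose_apply, Matrix.one_apply_eq] at this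
    rw [← this]
    exact Finset.sum_congr rfl fun k _ => (sq (R i k))
  have h1 : (R i j)^2 ≤ 1 := by
    rw [← hrow]
    exact Finset.single_le_sum (fun k _ => sq_nonneg (R i k)) (Finset.mem_univ j)
  nlinarith [abs_nonneg (R i j), sq_abs (R i j)]

private lemma integrable_bdd (horth : ∀ᵐ R ∂μ, R * R.transpose = 1)
    {f : Matrix (Fin d) (Fin d) ℝ → ℝ} (hf : Measurable f)
    (hb : ∀ R : Matrix (Fin d) (Fin d) ℝ, R * R.transpose = 1 → |f R| ≤ 1) :
    Integrable f μ := by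
  refine (integrable_const (1:ℝ)).mono' hf.aestronglyMeasurable ?_
  filter_upwards [horth] with R hR
  simpa using hb R hR

private lemma exists_perm_pair {i i' i₀ i₁ : Fin d} (h : i ≠ i') (h01 : i₀ ≠ i₁) :
    ∃ σ : Equiv.Perm (Fin d), σ i₀ = i ∧ σ i₁ = i' := by
  set σ₁ := Equiv.swap i₀ i with hσ₁
  have hi'' : σ₁ i' ≠ i₀ := by
    intro hc
    have h2 := congrArg σ₁ hc
    rw [Equiv.swap_apply_self] at h2
    rw [hσ₁, Equiv.swap_apply_left] at h2
    exact h h2.symm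
  refine ⟨(Equiv.swap i₁ (σ₁ i')).trans σ₁, ?_, ?_⟩
  · simp only [Equiv.trans_apply]
    rw [Equiv.swap_apply_of_ne_of_ne h01 (Ne.symm hi'')]
    rw [hσ₁, Equiv.swap_apply_left]
  · simp only [Equiv.trans_apply]
    rw [Equiv.swap_apply_left, Equiv.swap_apply_self]

end Meas

section Moments
variable {d : ℕ} (μ : Measure (Matrix (Fin d) (Fin d) ℝ)) [IsProbabilityMeasure μ]

private lemma abs_mul4_le_one {x y z w : ℝ} (hx : |x| ≤ 1) (hy : |y| ≤ 1) (hz : |z| ≤ 1)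
    (hw : |w| ≤ 1) : |x*y*z*w| ≤ 1 := by
  rw [abs_mul, abs_mul, abs_mul]
  have h1 : |x| * |y| ≤ 1 := mul_le_one₀ hx (abs_nonneg _) hy
  have h2 : |x| * |y| * |z| ≤ 1 := mul_le_one₀ h1 (abs_nonneg _) hz
  exact mul_le_one₀ h2 (abs_nonneg _) hw

private lemma meas_mon4 (a b c e : Fin d × Fin d) :
    Measurable (fun R : Matrix (Fin d) (Fin d) ℝ =>
      R a.1 a.2 * R b.1 b.2 * R c.1 c.2 * R e.1 e.2) :=
  (((measurable_entry a.1 a.2).mul (measurable_entry b.1 b.2)).mul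
    (measurable_entry c.1 c.2)).mul (measurable_entry e.1 e.2)

private lemma int_mon4 (horth : ∀ᵐ R ∂μ, R * R.transpose = 1) (a b c e : Fin d × Fin d) :
    Integrable (fun R : Matrix (Fin d) (Fin d) ℝ =>
      R a.1 a.2 * R b.1 b.2 * R c.1 c.2 * R e.1 e.2) μ :=
  integrable_bdd μ horth (meas_mon4 a b c e) fun R hR =>
    abs_mul4_le_one (entry_abs_le hR _ _) (entry_abs_le hR _ _) (entry_abs_le hR _ _)
      (entry_abs_le hR _ _)

private lemma meas_mon2 (a b : Fin d × Fin d) :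
    Measurable (fun R : Matrix (Fin d) (Fin d) ℝ => R a.1 a.2 * R b.1 b.2) :=
  (measurable_entry a.1 a.2).mul (measurable_entry b.1 b.2)

private lemma int_mon2 (horth : ∀ᵐ R ∂μ, R * R.transpose = 1) (a b : Fin d × Fin d) :
    Integrable (fun R : Matrix (Fin d) (Fin d) ℝ => R a.1 a.2 * R b.1 b.2) μ :=
  integrable_bdd μ horth (meas_mon2 a b) fun R hR => by
    rw [abs_mul]
    exact mul_le_one₀ (entry_abs_le hR _ _) (abs_nonneg _) (entry_abs_le hR _ _)

private lemma ae_colsum (horth : ∀ᵐ R ∂μ, R * R.transpose = 1) (j : Fin d) :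
    ∀ᵐ R ∂μ, ∑ i, (R i j)^2 = 1 := by
  filter_upwards [horth] with R hR
  have h' : R.transpose * R = 1 := mul_eq_one_comm.mp hR
  have := congrFun (congrFun h' j) j
  simp only [Matrix.mul_apply, Matrix.transpose_apply, Matrix.one_apply_eq] at this
  rw [← this]
  exact Finset.sum_congr rfl fun i _ => sq (R i j)

private lemma ae_colorth (horth : ∀ᵐ R ∂μ, R * R.transpose = 1) {j k : Fin d} (hjk : j ≠ k) :
    ∀ᵐ R ∂μ, ∑ i, R i j * R i k = 0 := by
  filter_upwards [horth] with R hR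
  have h' : R.transpose * R = 1 := mul_eq_one_comm.mp hR
  have := congrFun (congrFun h' j) k
  simp only [Matrix.mul_apply, Matrix.transpose_apply, Matrix.one_apply, if_neg hjk] at this
  exact this

private lemma ae_rowsum (horth : ∀ᵐ R ∂μ, R * R.transpose = 1) (i : Fin d) :
    ∀ᵐ R ∂μ, ∑ j, (R i j)^2 = 1 := by
  filter_upwards [horth] with R hR
  have := congrFun (congrFun hR i) i
  simp only [Matrix.mul_apply, Matrix.transpose_apply, Matrix.one_apply_eq] at this
  rw [← this]
  exact Finset.sum_congr rfl fun j _ => sq (R i j)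

-- second moment
private lemma mom2_eq (hd : 0 < d)
    (horth : ∀ᵐ R ∂μ, R * R.transpose = 1)
    (hinv : ∀ Q : Matrix (Fin d) (Fin d) ℝ, Q * Q.transpose = 1 →
      μ.map (fun R => Q * R) = μ) (i j : Fin d) :
    ∫ R, (R i j)^2 ∂μ = 1/(d:ℝ) := by
  have heq : ∀ i' : Fin d, ∫ R, (R i' j)^2 ∂μ = ∫ R, (R i j)^2 ∂μ := by
    intro i'
    have := integral_comp μ hinv (permM (Equiv.swap i i')) (permM_orth _)
      (fun R => (R i j)^2) ((measurable_entry i j).pow_const 2)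
    simpa [permM_apply, Equiv.swap_apply_left] using this
  have hint : ∀ i' : Fin d, Integrable (fun R => (R i' j)^2) μ := by
    intro i'
    have := int_mon2 μ horth (i', j) (i', j)
    simpa [sq] using this
  have hsum : ∑ i' : Fin d, ∫ R, (R i' j)^2 ∂μ = 1 := by
    rw [← integral_finset_sum _ (fun i' _ => hint i')]
    rw [integral_congr_ae (ae_colsum μ horth j)]
    simp
  rw [Finset.sum_congr rfl (fun i' _ => heq i')] at hsum
  simp only [Finset.sum_const, Finset.card_univ, Fintype.card_fin, nsmul_eq_mul] at hsum
  have hd' : (d:ℝ) ≠ 0 := Nat.cast_ne_zero.mpr hd.ne'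
  field_simp at hsum ⊢
  linarith

end Moments

section Moments2
variable {d : ℕ} (μ : Measure (Matrix (Fin d) (Fin d) ℝ)) [IsProbabilityMeasure μ]

private lemma int_p4 (horth : ∀ᵐ R ∂μ, R * R.transpose = 1) (i j : Fin d) :
    Integrable (fun R : Matrix (Fin d) (Fin d) ℝ => (R i j)^4) μ := by
  have h : (fun R : Matrix (Fin d) (Fin d) ℝ => (R i j)^4)
      = fun R => R i j * R i j * R i j * R i j := funext fun R => by ring
  rw [h]; exact int_mon4 μ horth (i,j) (i,j) (i,j) (i,j)

private lemma int_p22 (horth : ∀ᵐ R ∂μ, R * R.transpose = 1) (i j i' j' : Fin d) :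
    Integrable (fun R : Matrix (Fin d) (Fin d) ℝ => (R i j)^2 * (R i' j')^2) μ := by
  have h : (fun R : Matrix (Fin d) (Fin d) ℝ => (R i j)^2 * (R i' j')^2)
      = fun R => R i j * R i j * R i' j' * R i' j' := funext fun R => by ring
  rw [h]; exact int_mon4 μ horth (i,j) (i,j) (i',j') (i',j')

private lemma int_p31 (horth : ∀ᵐ R ∂μ, R * R.transpose = 1) (i j i' j' : Fin d) :
    Integrable (fun R : Matrix (Fin d) (Fin d) ℝ => (R i j)^3 * R i' j') μ := by
  have h : (fun R : Matrix (Fin d) (Fin d) ℝ => (R i j)^3 * R i' j')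
      = fun R => R i j * R i j * R i j * R i' j' := funext fun R => by ring
  rw [h]; exact int_mon4 μ horth (i,j) (i,j) (i,j) (i',j')

private lemma int_p13 (horth : ∀ᵐ R ∂μ, R * R.transpose = 1) (i j i' j' : Fin d) :
    Integrable (fun R : Matrix (Fin d) (Fin d) ℝ => R i j * (R i' j')^3) μ := by
  have h : (fun R : Matrix (Fin d) (Fin d) ℝ => R i j * (R i' j')^3)
      = fun R => R i j * R i' j' * R i' j' * R i' j' := funext fun R => by ring
  rw [h]; exact int_mon4 μ horth (i,j) (i',j') (i',j') (i',j')

private lemma int_p211 (horth : ∀ᵐ R ∂μ, R * R.transpose = 1) (a b c : Fin d × Fin d) :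
    Integrable (fun R : Matrix (Fin d) (Fin d) ℝ => (R a.1 a.2)^2 * (R b.1 b.2 * R c.1 c.2)) μ := by
  have h : (fun R : Matrix (Fin d) (Fin d) ℝ => (R a.1 a.2)^2 * (R b.1 b.2 * R c.1 c.2))
      = fun R => R a.1 a.2 * R a.1 a.2 * R b.1 b.2 * R c.1 c.2 := funext fun R => by ring
  rw [h]; exact int_mon4 μ horth a a b c

private lemma int_m1111 (horth : ∀ᵐ R ∂μ, R * R.transpose = 1) (a b c e : Fin d × Fin d) :
    Integrable (fun R : Matrix (Fin d) (Fin d) ℝ =>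
      R a.1 a.2 * R b.1 b.2 * (R c.1 c.2 * R e.1 e.2)) μ := by
  have h : (fun R : Matrix (Fin d) (Fin d) ℝ => R a.1 a.2 * R b.1 b.2 * (R c.1 c.2 * R e.1 e.2))
      = fun R => R a.1 a.2 * R b.1 b.2 * R c.1 c.2 * R e.1 e.2 := funext fun R => by ring
  rw [h]; exact int_mon4 μ horth a b c e

private lemma col4_eq (hd2 : 2 ≤ d)
    (horth : ∀ᵐ R ∂μ, R * R.transpose = 1)
    (hinv : ∀ Q : Matrix (Fin d) (Fin d) ℝ, Q * Q.transpose = 1 →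
      μ.map (fun R => Q * R) = μ) (j : Fin d) (i : Fin d) :
    ∫ R, (R i j)^4 ∂μ = 3/((d:ℝ)*((d:ℝ)+2)) := by
  have h0 : (0:ℕ) < d := by omega
  have h1 : (1:ℕ) < d := by omega
  set i₀ : Fin d := ⟨0, h0⟩ with hi₀
  set i₁ : Fin d := ⟨1, h1⟩ with hi₁
  have h01 : i₀ ≠ i₁ := by simp [hi₀, hi₁, Fin.ext_iff]
  set X := ∫ R, (R i₀ j)^4 ∂μ with hX
  set Y := ∫ R, (R i₀ j)^2 * (R i₁ j)^2 ∂μ with hY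
  -- row symmetry for 4th powers
  have symX : ∀ i' : Fin d, ∫ R, (R i' j)^4 ∂μ = X := by
    intro i'
    have := integral_comp μ hinv (permM (Equiv.swap i₀ i')) (permM_orth _)
      (fun R => (R i₀ j)^4) ((measurable_entry i₀ j).pow_const 4)
    simpa [permM_apply, Equiv.swap_apply_left] using this
  -- pair symmetry
  have symY : ∀ i' i'' : Fin d, i' ≠ i'' → ∫ R, (R i' j)^2 * (R i'' j)^2 ∂μ = Y := by
    intro i' i'' hne
    obtain ⟨σ, hσ0, hσ1⟩ := exists_perm_pair hne h01
    have := integral_comp μ hinv (permM σ) (permM_orth σ)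
      (fun R => (R i₀ j)^2 * (R i₁ j)^2)
      (((measurable_entry i₀ j).pow_const 2).mul ((measurable_entry i₁ j).pow_const 2))
    simpa [permM_apply, hσ0, hσ1] using this
  -- rotation relation via symmetrized functional : 2 X = X + 3 Y
  have hrot := integral_comp μ hinv (rotM i₀ i₁) (rotM_orth h01)
    (fun R => (R i₀ j)^4 + (R i₁ j)^4)
    (((measurable_entry i₀ j).pow_const 4).add ((measurable_entry i₁ j).pow_const 4))
  have hs2 : ((Real.sqrt 2)⁻¹ : ℝ)^2 = 1/2 := by rw [sq, sqrt2_sq]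
  have hexp : ∀ R : Matrix (Fin d) (Fin d) ℝ,
      ((rotM i₀ i₁ * R) i₀ j)^4 + ((rotM i₀ i₁ * R) i₁ j)^4 =
        (1/2) * (R i₀ j)^4 + (1/2) * (R i₁ j)^4 + 3 * ((R i₀ j)^2 * (R i₁ j)^2) := by
    intro R
    rw [rotM_apply h01, rotM_apply h01, if_pos rfl, if_neg (Ne.symm h01), if_pos rfl]
    have expand : ∀ a b s : ℝ, (s*(a-b))^4 + (s*(a+b))^4
        = (s^2)^2*(2*a^4 + 2*b^4 + 12*(a^2*b^2)) := by intros; ring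
    rw [expand, hs2]; ring
  rw [show (fun R => ((rotM i₀ i₁ * R) i₀ j)^4 + ((rotM i₀ i₁ * R) i₁ j)^4)
      = fun R : Matrix (Fin d) (Fin d) ℝ =>
        (1/2) * (R i₀ j)^4 + (1/2) * (R i₁ j)^4 + 3 * ((R i₀ j)^2 * (R i₁ j)^2)
      from funext hexp] at hrot
  rw [integral_add (f := fun R : Matrix (Fin d) (Fin d) ℝ =>
        (1/2) * (R i₀ j)^4 + (1/2) * (R i₁ j)^4)
      (g := fun R : Matrix (Fin d) (Fin d) ℝ => 3 * ((R i₀ j)^2 * (R i₁ j)^2))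
      (((int_p4 μ horth i₀ j).const_mul _).add ((int_p4 μ horth i₁ j).const_mul _))
      ((int_p22 μ horth i₀ j i₁ j).const_mul _),
    integral_add (f := fun R : Matrix (Fin d) (Fin d) ℝ => (1/2) * (R i₀ j)^4)
      (g := fun R : Matrix (Fin d) (Fin d) ℝ => (1/2) * (R i₁ j)^4)
      ((int_p4 μ horth i₀ j).const_mul _) ((int_p4 μ horth i₁ j).const_mul _),
    integral_const_mul, integral_const_mul, integral_const_mul,
    integral_add (f := fun R : Matrix (Fin d) (Fin d) ℝ => (R i₀ j)^4)
      (g := fun R : Matrix (Fin d) (Fin d) ℝ => (R i₁ j)^4)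
      (int_p4 μ horth i₀ j) (int_p4 μ horth i₁ j)] at hrot
  rw [symX i₀, symX i₁] at hrot
  -- hrot : 1/2 X + 1/2 X + 3 Y = X + X
  -- normalization : d * (X + (d-1) Y) = 1
  have hnorm : ∫ R, (∑ i', (R i' j)^2)^2 ∂μ = 1 := by
    have : ∀ᵐ R ∂μ, (∑ i', (R i' j)^2)^2 = 1 := by
      filter_upwards [ae_colsum μ horth j] with R hR
      rw [hR]; norm_num
    rw [integral_congr_ae this]; simp
  have hexp2 : ∀ R : Matrix (Fin d) (Fin d) ℝ, (∑ i', (R i' j)^2)^2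
      = ∑ i' : Fin d, ∑ i'' : Fin d, (R i' j)^2 * (R i'' j)^2 := by
    intro R
    rw [sq, Finset.sum_mul_sum]
  rw [show (fun R : Matrix (Fin d) (Fin d) ℝ => (∑ i', (R i' j)^2)^2)
      = fun R => ∑ i' : Fin d, ∑ i'' : Fin d, (R i' j)^2 * (R i'' j)^2 from funext hexp2] at hnorm
  rw [integral_finset_sum _ (fun i' _ => integrable_finset_sum _
      (fun i'' _ => int_p22 μ horth i' j i'' j))] at hnorm
  have hinner : ∀ i' : Fin d, ∫ R, (∑ i'' : Fin d, (R i' j)^2 * (R i'' j)^2) ∂μ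
      = X + ((d:ℝ) - 1) * Y := by
    intro i'
    rw [integral_finset_sum _ (fun i'' _ => int_p22 μ horth i' j i'' j)]
    rw [← Finset.add_sum_erase _ _ (Finset.mem_univ i')]
    have hdiag : ∫ R, (R i' j)^2 * (R i' j)^2 ∂μ = X := by
      rw [show (fun R : Matrix (Fin d) (Fin d) ℝ => (R i' j)^2 * (R i' j)^2)
          = fun R => (R i' j)^4 from funext fun R => by ring]
      exact symX i'
    rw [hdiag, Finset.sum_congr rfl (fun i'' hi'' => symY i' i''
        (Ne.symm (Finset.ne_of_mem_erase hi'')))]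
    rw [Finset.sum_const, Finset.card_erase_of_mem (Finset.mem_univ i'), Finset.card_univ,
      Fintype.card_fin, nsmul_eq_mul, Nat.cast_sub (by omega : 1 ≤ d), Nat.cast_one]
  rw [Finset.sum_congr rfl (fun i' _ => hinner i')] at hnorm
  simp only [Finset.sum_const, Finset.card_univ, Fintype.card_fin, nsmul_eq_mul] at hnorm
  have hdR : (0:ℝ) < (d:ℝ) := by exact_mod_cast h0
  have hden : (0:ℝ) < (d:ℝ)*((d:ℝ)+2) := by positivity
  have hX3 : X = 3*Y := by linarith
  rw [symX i, hX3, eq_div_iff hden.ne']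
  nlinarith [hnorm]

end Moments2

section Moments3
variable {d : ℕ} (μ : Measure (Matrix (Fin d) (Fin d) ℝ)) [IsProbabilityMeasure μ]

private lemma int_pp (horth : ∀ᵐ R ∂μ, R * R.transpose = 1) (a b c e : Fin d × Fin d) :
    Integrable (fun R : Matrix (Fin d) (Fin d) ℝ =>
      (R a.1 a.2 * R b.1 b.2) * (R c.1 c.2 * R e.1 e.2)) μ := by
  have h : (fun R : Matrix (Fin d) (Fin d) ℝ => (R a.1 a.2 * R b.1 b.2) * (R c.1 c.2 * R e.1 e.2))
      = fun R => R a.1 a.2 * R b.1 b.2 * R c.1 c.2 * R e.1 e.2 := funext fun R => by ring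
  rw [h]; exact int_mon4 μ horth a b c e

private lemma cross_eq (hd2 : 2 ≤ d)
    (horth : ∀ᵐ R ∂μ, R * R.transpose = 1)
    (hinv : ∀ Q : Matrix (Fin d) (Fin d) ℝ, Q * Q.transpose = 1 →
      μ.map (fun R => Q * R) = μ) {j k : Fin d} (hjk : j ≠ k) (i : Fin d) :
    ∫ R, (R i j)^2 * (R i k)^2 ∂μ = 1/((d:ℝ)*((d:ℝ)+2)) := by
  have h0 : (0:ℕ) < d := by omega
  have h1 : (1:ℕ) < d := by omega
  set i₀ : Fin d := ⟨0, h0⟩ with hi₀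
  set i₁ : Fin d := ⟨1, h1⟩ with hi₁
  have h01 : i₀ ≠ i₁ := by simp [hi₀, hi₁, Fin.ext_iff]
  set E1 := ∫ R, (R i₀ j)^2 * (R i₀ k)^2 ∂μ with hE1
  set E2 := ∫ R, (R i₀ j)^2 * (R i₁ k)^2 ∂μ with hE2
  set E3 := ∫ R, R i₀ j * R i₁ j * (R i₀ k * R i₁ k) ∂μ with hE3
  have symE1 : ∀ i' : Fin d, ∫ R, (R i' j)^2 * (R i' k)^2 ∂μ = E1 := by
    intro i'
    have := integral_comp μ hinv (permM (Equiv.swap i₀ i')) (permM_orth _)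
      (fun R => (R i₀ j)^2 * (R i₀ k)^2)
      (((measurable_entry i₀ j).pow_const 2).mul ((measurable_entry i₀ k).pow_const 2))
    simpa [permM_apply, Equiv.swap_apply_left] using this
  have symE2 : ∀ i' i'' : Fin d, i' ≠ i'' → ∫ R, (R i' j)^2 * (R i'' k)^2 ∂μ = E2 := by
    intro i' i'' hne
    obtain ⟨σ, hσ0, hσ1⟩ := exists_perm_pair hne h01
    have := integral_comp μ hinv (permM σ) (permM_orth σ)
      (fun R => (R i₀ j)^2 * (R i₁ k)^2)
      (((measurable_entry i₀ j).pow_const 2).mul ((measurable_entry i₁ k).pow_const 2))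
    simpa [permM_apply, hσ0, hσ1] using this
  have symE3 : ∀ i' i'' : Fin d, i' ≠ i'' →
      ∫ R, R i' j * R i'' j * (R i' k * R i'' k) ∂μ = E3 := by
    intro i' i'' hne
    obtain ⟨σ, hσ0, hσ1⟩ := exists_perm_pair hne h01
    have := integral_comp μ hinv (permM σ) (permM_orth σ)
      (fun R => R i₀ j * R i₁ j * (R i₀ k * R i₁ k))
      (((measurable_entry i₀ j).mul (measurable_entry i₁ j)).mul
        ((measurable_entry i₀ k).mul (measurable_entry i₁ k)))
    simpa [permM_apply, hσ0, hσ1] using this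
  -- orthogonality of columns : d E1 + d(d-1) E3 = 0
  have hortho : ∫ R, (∑ i', R i' j * R i' k)^2 ∂μ = 0 := by
    have : ∀ᵐ R ∂μ, (∑ i', R i' j * R i' k)^2 = 0 := by
      filter_upwards [ae_colorth μ horth hjk] with R hR
      rw [hR]; norm_num
    rw [integral_congr_ae this]; simp
  rw [show (fun R : Matrix (Fin d) (Fin d) ℝ => (∑ i', R i' j * R i' k)^2)
      = fun R => ∑ i' : Fin d, ∑ i'' : Fin d, (R i' j * R i' k) * (R i'' j * R i'' k)
      from funext fun R => by rw [sq, Finset.sum_mul_sum]] at hortho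
  rw [integral_finset_sum _ (fun i' _ => integrable_finset_sum _
      (fun i'' _ => int_pp μ horth (i',j) (i',k) (i'',j) (i'',k)))] at hortho
  have hinner1 : ∀ i' : Fin d,
      ∫ R, (∑ i'' : Fin d, (R i' j * R i' k) * (R i'' j * R i'' k)) ∂μ
      = E1 + ((d:ℝ) - 1) * E3 := by
    intro i'
    rw [integral_finset_sum _ (fun i'' _ => int_pp μ horth (i',j) (i',k) (i'',j) (i'',k))]
    rw [← Finset.add_sum_erase _ _ (Finset.mem_univ i')]
    have hdiag : ∫ R, (R i' j * R i' k) * (R i' j * R i' k) ∂μ = E1 := by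
      rw [show (fun R : Matrix (Fin d) (Fin d) ℝ => (R i' j * R i' k) * (R i' j * R i' k))
          = fun R => (R i' j)^2 * (R i' k)^2 from funext fun R => by ring]
      exact symE1 i'
    have hoffd : ∀ i'' ∈ Finset.univ.erase i',
        ∫ R, (R i' j * R i' k) * (R i'' j * R i'' k) ∂μ = E3 := by
      intro i'' hi''
      rw [show (fun R : Matrix (Fin d) (Fin d) ℝ => (R i' j * R i' k) * (R i'' j * R i'' k))
          = fun R => R i' j * R i'' j * (R i' k * R i'' k) from funext fun R => by ring]
      exact symE3 i' i'' (Ne.symm (Finset.ne_of_mem_erase hi''))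
    rw [hdiag, Finset.sum_congr rfl hoffd, Finset.sum_const,
      Finset.card_erase_of_mem (Finset.mem_univ i'), Finset.card_univ, Fintype.card_fin,
      nsmul_eq_mul, Nat.cast_sub (by omega : 1 ≤ d), Nat.cast_one]
  rw [Finset.sum_congr rfl (fun i' _ => hinner1 i'), Finset.sum_const, Finset.card_univ,
    Fintype.card_fin, nsmul_eq_mul] at hortho
  -- norms : d E1 + d(d-1) E2 = 1
  have hnorm : ∫ R, (∑ i', (R i' j)^2) * (∑ i', (R i' k)^2) ∂μ = 1 := by
    have : ∀ᵐ R ∂μ, (∑ i', (R i' j)^2) * (∑ i', (R i' k)^2) = 1 := by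
      filter_upwards [ae_colsum μ horth j, ae_colsum μ horth k] with R h1 h2
      rw [h1, h2]; norm_num
    rw [integral_congr_ae this]; simp
  rw [show (fun R : Matrix (Fin d) (Fin d) ℝ => (∑ i', (R i' j)^2) * (∑ i', (R i' k)^2))
      = fun R => ∑ i' : Fin d, ∑ i'' : Fin d, (R i' j)^2 * (R i'' k)^2
      from funext fun R => by rw [Finset.sum_mul_sum]] at hnorm
  rw [integral_finset_sum _ (fun i' _ => integrable_finset_sum _
      (fun i'' _ => int_p22 μ horth i' j i'' k))] at hnorm
  have hinner2 : ∀ i' : Fin d,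
      ∫ R, (∑ i'' : Fin d, (R i' j)^2 * (R i'' k)^2) ∂μ = E1 + ((d:ℝ) - 1) * E2 := by
    intro i'
    rw [integral_finset_sum _ (fun i'' _ => int_p22 μ horth i' j i'' k)]
    rw [← Finset.add_sum_erase _ _ (Finset.mem_univ i')]
    rw [symE1 i', Finset.sum_congr rfl (fun i'' hi'' => symE2 i' i''
        (Ne.symm (Finset.ne_of_mem_erase hi''))), Finset.sum_const,
      Finset.card_erase_of_mem (Finset.mem_univ i'), Finset.card_univ, Fintype.card_fin,
      nsmul_eq_mul, Nat.cast_sub (by omega : 1 ≤ d), Nat.cast_one]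
  rw [Finset.sum_congr rfl (fun i' _ => hinner2 i'), Finset.sum_const, Finset.card_univ,
    Fintype.card_fin, nsmul_eq_mul] at hnorm
  -- rotation relation : E1 = E2 + 2 E3
  have hrot := integral_comp μ hinv (rotM i₀ i₁) (rotM_orth h01)
    (fun R => (R i₀ j)^2 * (R i₀ k)^2 + (R i₁ j)^2 * (R i₁ k)^2)
    ((((measurable_entry i₀ j).pow_const 2).mul ((measurable_entry i₀ k).pow_const 2)).add
      (((measurable_entry i₁ j).pow_const 2).mul ((measurable_entry i₁ k).pow_const 2)))
  have hs2 : ((Real.sqrt 2)⁻¹ : ℝ)^2 = 1/2 := by rw [sq, sqrt2_sq]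
  have hexp : ∀ R : Matrix (Fin d) (Fin d) ℝ,
      ((rotM i₀ i₁ * R) i₀ j)^2 * ((rotM i₀ i₁ * R) i₀ k)^2
        + ((rotM i₀ i₁ * R) i₁ j)^2 * ((rotM i₀ i₁ * R) i₁ k)^2 =
      (1/2) * ((R i₀ j)^2 * (R i₀ k)^2) + (1/2) * ((R i₁ j)^2 * (R i₁ k)^2)
        + ((1/2) * ((R i₀ j)^2 * (R i₁ k)^2) + (1/2) * ((R i₁ j)^2 * (R i₀ k)^2)
        + 2 * (R i₀ j * R i₁ j * (R i₀ k * R i₁ k))) := by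
    intro R
    rw [rotM_apply h01, rotM_apply h01, rotM_apply h01, rotM_apply h01,
      if_pos rfl, if_pos rfl, if_neg (Ne.symm h01), if_pos rfl,
      if_neg (Ne.symm h01), if_pos rfl]
    have expand : ∀ a b u v s : ℝ, (s*(a-b))^2*(s*(u-v))^2 + (s*(a+b))^2*(s*(u+v))^2
        = (s^2)^2*(2*((a*u)^2+(b*v)^2+(a*v)^2+(b*u)^2) + 8*(a*b*(u*v))) := by
      intros; ring
    rw [expand (R i₀ j) (R i₁ j) (R i₀ k) (R i₁ k) ((Real.sqrt 2)⁻¹), hs2]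
    ring
  rw [show (fun R => ((rotM i₀ i₁ * R) i₀ j)^2 * ((rotM i₀ i₁ * R) i₀ k)^2
        + ((rotM i₀ i₁ * R) i₁ j)^2 * ((rotM i₀ i₁ * R) i₁ k)^2)
      = fun R : Matrix (Fin d) (Fin d) ℝ =>
      (1/2) * ((R i₀ j)^2 * (R i₀ k)^2) + (1/2) * ((R i₁ j)^2 * (R i₁ k)^2)
        + ((1/2) * ((R i₀ j)^2 * (R i₁ k)^2) + (1/2) * ((R i₁ j)^2 * (R i₀ k)^2)
        + 2 * (R i₀ j * R i₁ j * (R i₀ k * R i₁ k)))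
      from funext hexp] at hrot
  rw [integral_add (f := fun R : Matrix (Fin d) (Fin d) ℝ =>
        (1/2) * ((R i₀ j)^2 * (R i₀ k)^2) + (1/2) * ((R i₁ j)^2 * (R i₁ k)^2))
      (g := fun R : Matrix (Fin d) (Fin d) ℝ =>
        (1/2) * ((R i₀ j)^2 * (R i₁ k)^2) + (1/2) * ((R i₁ j)^2 * (R i₀ k)^2)
        + 2 * (R i₀ j * R i₁ j * (R i₀ k * R i₁ k)))
      (((int_p22 μ horth i₀ j i₀ k).const_mul _).add ((int_p22 μ horth i₁ j i₁ k).const_mul _))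
      ((((int_p22 μ horth i₀ j i₁ k).const_mul _).add
        ((int_p22 μ horth i₁ j i₀ k).const_mul _)).add
        ((int_m1111 μ horth (i₀,j) (i₁,j) (i₀,k) (i₁,k)).const_mul _)),
    integral_add (f := fun R : Matrix (Fin d) (Fin d) ℝ => (1/2) * ((R i₀ j)^2 * (R i₀ k)^2))
      (g := fun R : Matrix (Fin d) (Fin d) ℝ => (1/2) * ((R i₁ j)^2 * (R i₁ k)^2))
      ((int_p22 μ horth i₀ j i₀ k).const_mul _) ((int_p22 μ horth i₁ j i₁ k).const_mul _),
    integral_add (f := fun R : Matrix (Fin d) (Fin d) ℝ =>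
        (1/2) * ((R i₀ j)^2 * (R i₁ k)^2) + (1/2) * ((R i₁ j)^2 * (R i₀ k)^2))
      (g := fun R : Matrix (Fin d) (Fin d) ℝ => 2 * (R i₀ j * R i₁ j * (R i₀ k * R i₁ k)))
      (((int_p22 μ horth i₀ j i₁ k).const_mul _).add ((int_p22 μ horth i₁ j i₀ k).const_mul _))
      ((int_m1111 μ horth (i₀,j) (i₁,j) (i₀,k) (i₁,k)).const_mul _),
    integral_add (f := fun R : Matrix (Fin d) (Fin d) ℝ => (1/2) * ((R i₀ j)^2 * (R i₁ k)^2))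
      (g := fun R : Matrix (Fin d) (Fin d) ℝ => (1/2) * ((R i₁ j)^2 * (R i₀ k)^2))
      ((int_p22 μ horth i₀ j i₁ k).const_mul _) ((int_p22 μ horth i₁ j i₀ k).const_mul _),
    integral_const_mul, integral_const_mul, integral_const_mul, integral_const_mul,
    integral_const_mul,
    integral_add (f := fun R : Matrix (Fin d) (Fin d) ℝ => (R i₀ j)^2 * (R i₀ k)^2)
      (g := fun R : Matrix (Fin d) (Fin d) ℝ => (R i₁ j)^2 * (R i₁ k)^2)
      (int_p22 μ horth i₀ j i₀ k) (int_p22 μ horth i₁ j i₁ k)] at hrot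
  rw [symE1 i₁, symE2 i₁ i₀ (Ne.symm h01)] at hrot
  -- hrot : 1/2 E1 + 1/2 E1 + (1/2 E2 + 1/2 E2 + 2 E3) = E1 + E1
  have hrotEq : E1 = E2 + 2*E3 := by linarith
  have hdR : (0:ℝ) < (d:ℝ) := by exact_mod_cast h0
  have hden : (0:ℝ) < (d:ℝ)*((d:ℝ)+2) := by positivity
  rw [symE1 i, eq_div_iff hden.ne']
  linear_combination hnorm + ((d:ℝ)*((d:ℝ)-1))*hrotEq + 2*hortho

end Moments3

section SMom
variable {d : ℕ} (μ : Measure (Matrix (Fin d) (Fin d) ℝ)) [IsProbabilityMeasure μ]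

private lemma int_p2 (horth : ∀ᵐ R ∂μ, R * R.transpose = 1) (i j : Fin d) :
    Integrable (fun R : Matrix (Fin d) (Fin d) ℝ => (R i j)^2) μ := by
  have := int_mon2 μ horth (i, j) (i, j)
  simpa [sq] using this

private lemma S_moment1 (hd : 0 < d)
    (horth : ∀ᵐ R ∂μ, R * R.transpose = 1)
    (hinv : ∀ Q : Matrix (Fin d) (Fin d) ℝ, Q * Q.transpose = 1 →
      μ.map (fun R => Q * R) = μ) (ν : Fin d → ℝ) (hsum : ∑ i, ν i = d) (i : Fin d) :
    ∫ R, (∑ j, (R i j)^2 * ν j) ∂μ = 1 := by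
  rw [integral_finset_sum _ (fun j _ => (int_p2 μ horth i j).mul_const (ν j))]
  have hterm : ∀ j : Fin d, ∫ R, (R i j)^2 * ν j ∂μ = ν j / d := by
    intro j
    rw [integral_mul_const, mom2_eq μ hd horth hinv i j]
    ring
  rw [Finset.sum_congr rfl fun j _ => hterm j, ← Finset.sum_div, hsum]
  have : ((d:ℝ)) ≠ 0 := Nat.cast_ne_zero.mpr hd.ne'
  field_simp

private lemma S_moment2 (hd2 : 2 ≤ d)
    (horth : ∀ᵐ R ∂μ, R * R.transpose = 1)
    (hinv : ∀ Q : Matrix (Fin d) (Fin d) ℝ, Q * Q.transpose = 1 →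
      μ.map (fun R => Q * R) = μ) (ν : Fin d → ℝ) (hsum : ∑ i, ν i = d) (i : Fin d) :
    ∫ R, (∑ j, (R i j)^2 * ν j)^2 ∂μ
      = (2*(∑ j, (ν j)^2) + (d:ℝ)^2)/((d:ℝ)*((d:ℝ)+2)) := by
  have hD : (0:ℝ) < (d:ℝ)*((d:ℝ)+2) := by
    have : (0:ℝ) < (d:ℝ) := by exact_mod_cast (by omega : 0 < d)
    positivity
  rw [show (fun R : Matrix (Fin d) (Fin d) ℝ => (∑ j, (R i j)^2 * ν j)^2)
      = fun R => ∑ j : Fin d, ∑ k : Fin d, (ν j * ν k) * ((R i j)^2 * (R i k)^2) from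
      funext fun R => by
        rw [sq, Finset.sum_mul_sum]
        exact Finset.sum_congr rfl fun j _ => Finset.sum_congr rfl fun k _ => by ring]
  rw [integral_finset_sum _ (fun j _ => integrable_finset_sum _
      (fun k _ => (int_p22 μ horth i j i k).const_mul _))]
  have hinner : ∀ j : Fin d,
      ∫ R, (∑ k : Fin d, (ν j * ν k) * ((R i j)^2 * (R i k)^2)) ∂μ
      = (ν j * ν j) * (3/((d:ℝ)*((d:ℝ)+2)))
        + (ν j * ((d:ℝ) - ν j)) * (1/((d:ℝ)*((d:ℝ)+2))) := by
    intro j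
    rw [integral_finset_sum _ (fun k _ => (int_p22 μ horth i j i k).const_mul _)]
    rw [Finset.sum_congr rfl (g := fun k => (ν j * ν k) * ∫ R, (R i j)^2 * (R i k)^2 ∂μ)
      (fun k _ => integral_const_mul _ _)]
    rw [← Finset.add_sum_erase _ _ (Finset.mem_univ j)]
    have hdiag : ∫ R, (R i j)^2 * (R i j)^2 ∂μ = 3/((d:ℝ)*((d:ℝ)+2)) := by
      rw [show (fun R : Matrix (Fin d) (Fin d) ℝ => (R i j)^2 * (R i j)^2)
          = fun R => (R i j)^4 from funext fun R => by ring]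
      exact col4_eq μ hd2 horth hinv j i
    rw [hdiag]
    congr 1
    have hoff : ∀ k ∈ Finset.univ.erase j,
        (ν j * ν k) * ∫ R, (R i j)^2 * (R i k)^2 ∂μ
          = ν k * (ν j * (1/((d:ℝ)*((d:ℝ)+2)))) := by
      intro k hk
      rw [cross_eq μ hd2 horth hinv (Ne.symm (Finset.ne_of_mem_erase hk)) i]
      ring
    rw [Finset.sum_congr rfl hoff, ← Finset.sum_mul,
      Finset.sum_erase_eq_sub (Finset.mem_univ j), hsum]
    ring
  rw [Finset.sum_congr rfl (fun j _ => hinner j)]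
  rw [Finset.sum_add_distrib]
  rw [show (∑ j, (ν j * ν j) * (3/((d:ℝ)*((d:ℝ)+2))))
      = (∑ j, (ν j)^2) * (3/((d:ℝ)*((d:ℝ)+2))) from by
    rw [← Finset.sum_mul]; congr 1; exact Finset.sum_congr rfl fun j _ => (sq (ν j)).symm]
  rw [show (∑ j, (ν j * ((d:ℝ) - ν j)) * (1/((d:ℝ)*((d:ℝ)+2))))
      = ((d:ℝ)*(d:ℝ) - ∑ j, (ν j)^2) * (1/((d:ℝ)*((d:ℝ)+2))) from by
    rw [← Finset.sum_mul]; congr 1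
    rw [show (∑ j, ν j * ((d:ℝ) - ν j)) = ∑ j, (ν j * (d:ℝ) - (ν j)^2) from
      Finset.sum_congr rfl fun j _ => by ring]
    rw [Finset.sum_sub_distrib, ← Finset.sum_mul, hsum]]
  field_simp
  ring

end SMom

/-- Let `ν i > 0` with `∑ i, ν i = d` and `(max_i ν i) / (min_i ν i) ≤ κ`.
If `R` is Haar-distributed on the orthogonal group `O(d)` (encoded as a probability measure
on `d × d` matrices concentrated on orthogonal matrices and invariant under left translation
by every orthogonal matrix), then
`E_R[∑ i, log (∑ j, R i j ^ 2 * ν j)] ≤ (2 / ((d + 2) κ²)) ∑ i, log (ν i)`. -/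
theorem haar_orthogonal_log_bound
    {d : ℕ} (hd : 0 < d) (ν : Fin d → ℝ) (hν : ∀ i, 0 < ν i)
    (hsum : ∑ i, ν i = d) (κ : ℝ)
    (hκ : (⨆ i, ν i) / (⨅ i, ν i) ≤ κ)
    (μHaar : Measure (Matrix (Fin d) (Fin d) ℝ)) [IsProbabilityMeasure μHaar]
    (hHaar_orth : ∀ᵐ R ∂μHaar, R * R.transpose = 1)
    (hHaar_inv : ∀ Q : Matrix (Fin d) (Fin d) ℝ, Q * Q.transpose = 1 →
      μHaar.map (fun R => Q * R) = μHaar) :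
    ∫ R, (∑ i, Real.log (∑ j, R i j ^ 2 * ν j)) ∂μHaar
      ≤ (2 / ((d + 2) * κ ^ 2)) * ∑ i, Real.log (ν i) := by
  by_cases hd1 : d = 1
  · subst hd1
    have hν0 : ν 0 = 1 := by
      have := hsum
      simpa using this
    have hL : ∫ R, (∑ i, Real.log (∑ j, R i j ^ 2 * ν j)) ∂μHaar = 0 := by
      have hae : ∀ᵐ R ∂μHaar, (∑ i, Real.log (∑ j, R i j ^ 2 * ν j)) = 0 := by
        filter_upwards [hHaar_orth] with R hR
        have h00 : R 0 0 * R 0 0 = 1 := by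
          have := congrFun (congrFun hR 0) 0
          simpa [Matrix.mul_apply] using this
        have hsq : R 0 0 ^ 2 = 1 := by rw [sq]; exact h00
        rw [Fin.sum_univ_one, Fin.sum_univ_one, hν0, hsq]
        norm_num
      rw [integral_congr_ae hae, integral_zero]
    rw [hL]
    simp [Fin.sum_univ_one, hν0]
  · -- main case : d ≥ 2
    have hd2 : 2 ≤ d := by omega
    set m := ⨅ i, ν i with hm_def
    set Mv := ⨆ i, ν i with hMv_def
    have hbddb : BddBelow (Set.range ν) := (Set.finite_range ν).bddBelow
    have hbdda : BddAbove (Set.range ν) := (Set.finite_range ν).bddAbove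
    haveI : Nonempty (Fin d) := ⟨⟨0, hd⟩⟩
    have hmle : ∀ i, m ≤ ν i := fun i => ciInf_le hbddb i
    have hMge : ∀ i, ν i ≤ Mv := fun i => le_ciSup hbdda i
    obtain ⟨i0, _, hi0⟩ := Finset.exists_min_image Finset.univ ν
      ⟨⟨0, hd⟩, Finset.mem_univ _⟩
    have hm_pos : 0 < m :=
      lt_of_lt_of_le (hν i0) (le_ciInf fun i => hi0 i (Finset.mem_univ i))
    set D := (d:ℝ) with hD_def
    have hD0 : (0:ℝ) < D := by rw [hD_def]; exact_mod_cast hd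
    have hm1 : m ≤ 1 := by
      have h1 : D * m ≤ D := by
        calc D * m = ∑ _i : Fin d, m := by
              rw [Finset.sum_const, Finset.card_univ, Fintype.card_fin, nsmul_eq_mul]
          _ ≤ ∑ i, ν i := Finset.sum_le_sum fun i _ => hmle i
          _ = D := hsum
      nlinarith
    have hM1 : 1 ≤ Mv := by
      have h1 : D ≤ D * Mv := by
        calc D = ∑ i, ν i := hsum.symm
          _ ≤ ∑ _i : Fin d, Mv := Finset.sum_le_sum fun i _ => hMge i
          _ = D * Mv := by
              rw [Finset.sum_const, Finset.card_univ, Fintype.card_fin, nsmul_eq_mul]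
      nlinarith
    have hmM : m ≤ Mv := le_trans (hmle ⟨0, hd⟩) (hMge ⟨0, hd⟩)
    have hκm : Mv ≤ κ * m := (div_le_iff₀ hm_pos).mp hκ
    have hκ1 : 1 ≤ κ := by
      have : 1 ≤ Mv / m := (one_le_div hm_pos).mpr hmM
      linarith [hκ]
    have hκpos : (0:ℝ) < κ := lt_of_lt_of_le one_pos hκ1
    have hMv_pos : (0:ℝ) < Mv := lt_of_lt_of_le one_pos hM1
    set Sq := ∑ j, (ν j)^2 with hSq_def
    have hvar : ∑ i, (ν i - 1)^2 = Sq - D := by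
      have : ∀ i : Fin d, (ν i - 1)^2 = (ν i)^2 - 2 * ν i + 1 := fun i => by ring
      rw [Finset.sum_congr rfl fun i _ => this i]
      rw [Finset.sum_add_distrib, Finset.sum_sub_distrib, ← Finset.mul_sum, hsum]
      rw [Finset.sum_const, Finset.card_univ, Fintype.card_fin, nsmul_eq_mul]
      ring
    have hSqD : D ≤ Sq := by
      have h1 : (0:ℝ) ≤ ∑ i, (ν i - 1)^2 :=
        Finset.sum_nonneg fun i _ => sq_nonneg _
      linarith [hvar]
    -- measurability and bounds for S i
    have hSmeas : ∀ i : Fin d, Measurable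
        (fun R : Matrix (Fin d) (Fin d) ℝ => ∑ j, (R i j)^2 * ν j) := fun i =>
      Finset.measurable_sum _ fun j _ => ((measurable_entry i j).pow_const 2).mul_const _
    have hSbound : ∀ᵐ R ∂μHaar, ∀ i : Fin d,
        m ≤ (∑ j, (R i j)^2 * ν j) ∧ (∑ j, (R i j)^2 * ν j) ≤ Mv := by
      filter_upwards [hHaar_orth] with R hR
      intro i
      have hrow : ∑ j, (R i j)^2 = 1 := by
        have := congrFun (congrFun hR i) i
        simp only [Matrix.mul_apply, Matrix.transpose_apply, Matrix.one_apply_eq] at this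
        rw [← this]
        exact Finset.sum_congr rfl fun j _ => sq (R i j)
      constructor
      · calc m = ∑ j, (R i j)^2 * m := by rw [← Finset.sum_mul, hrow, one_mul]
          _ ≤ ∑ j, (R i j)^2 * ν j :=
            Finset.sum_le_sum fun j _ =>
              mul_le_mul_of_nonneg_left (hmle j) (sq_nonneg _)
      · calc (∑ j, (R i j)^2 * ν j) ≤ ∑ j, (R i j)^2 * Mv :=
            Finset.sum_le_sum fun j _ =>
              mul_le_mul_of_nonneg_left (hMge j) (sq_nonneg _)
          _ = Mv := by rw [← Finset.sum_mul, hrow, one_mul]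
    -- integrability of log S i
    have hlogint : ∀ i : Fin d, Integrable
        (fun R : Matrix (Fin d) (Fin d) ℝ => Real.log (∑ j, (R i j)^2 * ν j)) μHaar := by
      intro i
      refine (integrable_const (|Real.log m| + |Real.log Mv|)).mono'
        ((Real.measurable_log.comp (hSmeas i)).aestronglyMeasurable) ?_
      filter_upwards [hSbound] with R hR
      obtain ⟨h1, h2⟩ := hR i
      have hS_pos : 0 < ∑ j, (R i j)^2 * ν j := lt_of_lt_of_le hm_pos h1
      have hlog1 : Real.log m ≤ Real.log (∑ j, (R i j)^2 * ν j) :=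
        Real.log_le_log hm_pos h1
      have hlog2 : Real.log (∑ j, (R i j)^2 * ν j) ≤ Real.log Mv :=
        Real.log_le_log hS_pos h2
      rw [Real.norm_eq_abs, abs_le]
      constructor
      · have := neg_abs_le (Real.log m)
        have := le_abs_self (Real.log Mv)
        have := abs_nonneg (Real.log Mv)
        linarith
      · have := le_abs_self (Real.log Mv)
        have := abs_nonneg (Real.log m)
        linarith
    -- integrability of S i  and  (S i)^2
    have hSint : ∀ i : Fin d, Integrable
        (fun R : Matrix (Fin d) (Fin d) ℝ => ∑ j, (R i j)^2 * ν j) μHaar := fun i =>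
      integrable_finset_sum _ fun j _ => (int_p2 μHaar hHaar_orth i j).mul_const _
    have hS2int : ∀ i : Fin d, Integrable
        (fun R : Matrix (Fin d) (Fin d) ℝ => (∑ j, (R i j)^2 * ν j)^2) μHaar := by
      intro i
      rw [show (fun R : Matrix (Fin d) (Fin d) ℝ => (∑ j, (R i j)^2 * ν j)^2)
          = fun R => ∑ j : Fin d, ∑ k : Fin d, (ν j * ν k) * ((R i j)^2 * (R i k)^2) from
        funext fun R => by
          rw [sq, Finset.sum_mul_sum]
          exact Finset.sum_congr rfl fun j _ => Finset.sum_congr rfl fun k _ => by ring]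
      exact integrable_finset_sum _ fun j _ => integrable_finset_sum _
        fun k _ => (int_p22 μHaar hHaar_orth i j i k).const_mul _
    -- the key per-row integral inequality
    set VT := (2*Sq + D^2)/(D*(D+2)) with hVT_def
    have key : ∀ i : Fin d, ∫ R, Real.log (∑ j, (R i j)^2 * ν j) ∂μHaar
        ≤ -(VT - 1)/(2*Mv^2) := by
      intro i
      have hmono : ∫ R, Real.log (∑ j, (R i j)^2 * ν j) ∂μHaar
          ≤ ∫ R, ((-1 - 1/(2*Mv^2)) + ((1 + 1/Mv^2) * (∑ j, (R i j)^2 * ν j)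
              + (-(1/(2*Mv^2))) * (∑ j, (R i j)^2 * ν j)^2)) ∂μHaar := by
        refine integral_mono_ae (hlogint i)
          ((integrable_const _).add (((hSint i).const_mul _).add ((hS2int i).const_mul _))) ?_
        filter_upwards [hSbound] with R hR
        obtain ⟨h1, h2⟩ := hR i
        have hS_pos : 0 < ∑ j, (R i j)^2 * ν j := lt_of_lt_of_le hm_pos h1
        have := logA hS_pos hM1 h2
        have hring : ((∑ j, (R i j)^2 * ν j) - 1)
              - ((∑ j, (R i j)^2 * ν j) - 1)^2/(2*Mv^2)
            = (-1 - 1/(2*Mv^2)) + ((1 + 1/Mv^2) * (∑ j, (R i j)^2 * ν j)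
              + (-(1/(2*Mv^2))) * (∑ j, (R i j)^2 * ν j)^2) := by
          field_simp
          ring
        linarith [hring ▸ this]
      rw [integral_add (f := fun _ : Matrix (Fin d) (Fin d) ℝ => -1 - 1/(2*Mv^2))
          (g := fun R : Matrix (Fin d) (Fin d) ℝ =>
            (1 + 1/Mv^2) * (∑ j, (R i j)^2 * ν j)
              + (-(1/(2*Mv^2))) * (∑ j, (R i j)^2 * ν j)^2)
          (integrable_const _)
          (((hSint i).const_mul _).add ((hS2int i).const_mul _)),
        integral_add (f := fun R : Matrix (Fin d) (Fin d) ℝ =>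
            (1 + 1/Mv^2) * (∑ j, (R i j)^2 * ν j))
          (g := fun R : Matrix (Fin d) (Fin d) ℝ =>
            (-(1/(2*Mv^2))) * (∑ j, (R i j)^2 * ν j)^2)
          ((hSint i).const_mul _) ((hS2int i).const_mul _),
        integral_const, integral_const_mul, integral_const_mul,
        S_moment1 μHaar hd hHaar_orth hHaar_inv ν hsum i,
        S_moment2 μHaar hd2 hHaar_orth hHaar_inv ν hsum i] at hmono
      simp only [measure_univ, probReal_univ, ENNReal.toReal_one, smul_eq_mul, one_mul, mul_one] at hmono
      calc ∫ R, Real.log (∑ j, (R i j)^2 * ν j) ∂μHaar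
          ≤ (-1 - 1/(2*Mv^2)) + ((1 + 1/Mv^2)
              + (-(1/(2*Mv^2))) * ((2*Sq + D^2)/(D*(D+2)))) := hmono
        _ = -(VT - 1)/(2*Mv^2) := by
            rw [hVT_def]
            field_simp
            ring
    -- sum over i
    have hLHS : ∫ R, (∑ i, Real.log (∑ j, R i j ^ 2 * ν j)) ∂μHaar
        ≤ -(Sq - D)/((D+2)*Mv^2) := by
      rw [integral_finset_sum _ (fun i _ => hlogint i)]
      calc (∑ i : Fin d, ∫ R, Real.log (∑ j, (R i j)^2 * ν j) ∂μHaar)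
          ≤ ∑ _i : Fin d, -(VT - 1)/(2*Mv^2) :=
            Finset.sum_le_sum fun i _ => key i
        _ = D * (-(VT - 1)/(2*Mv^2)) := by
            rw [Finset.sum_const, Finset.card_univ, Fintype.card_fin, nsmul_eq_mul]
        _ = -(Sq - D)/((D+2)*Mv^2) := by
            rw [hVT_def]
            have hD2 : (0:ℝ) < D + 2 := by linarith
            field_simp
            ring
    -- lower bound for ∑ log ν
    have hlog_lb : -(Sq - D)/(2*m^2) ≤ ∑ i, Real.log (ν i) := by
      have h1 : ∀ i : Fin d, (ν i - 1) - (ν i - 1)^2/(2*m^2) ≤ Real.log (ν i) := by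
        intro i
        have := logB hm_pos hm1 (hmle i)
        linarith
      calc -(Sq - D)/(2*m^2) = ∑ i, ((ν i - 1) - (ν i - 1)^2/(2*m^2)) := by
            rw [Finset.sum_sub_distrib, Finset.sum_sub_distrib]
            rw [show (∑ i, (ν i - 1)^2/(2*m^2)) = (∑ i, (ν i - 1)^2)/(2*m^2) from
              (Finset.sum_div _ _ _).symm, hvar]
            rw [Finset.sum_const, Finset.card_univ, Fintype.card_fin, nsmul_eq_mul, hsum]
            ring
        _ ≤ ∑ i, Real.log (ν i) := Finset.sum_le_sum fun i _ => h1 i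
    -- final chain
    have hM2 : Mv^2 ≤ κ^2 * m^2 := by nlinarith
    have hD2 : (0:ℝ) < D + 2 := by linarith
    have hstep : -(Sq - D)/((D+2)*Mv^2) ≤ (2/((D+2)*κ^2)) * (-(Sq - D)/(2*m^2)) := by
      have hrhs_eq : (2/((D+2)*κ^2)) * (-(Sq - D)/(2*m^2)) = -(Sq - D)/((D+2)*(κ^2*m^2)) := by
        field_simp
      rw [hrhs_eq, neg_div, neg_div, neg_le_neg_iff]
      apply div_le_div_of_nonneg_left (by linarith : (0:ℝ) ≤ Sq - D)
        (by positivity)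
      exact mul_le_mul_of_nonneg_left hM2 (le_of_lt hD2)
    have hc_nonneg : (0:ℝ) ≤ 2/((D+2)*κ^2) := by positivity
    calc ∫ R, (∑ i, Real.log (∑ j, R i j ^ 2 * ν j)) ∂μHaar
        ≤ -(Sq - D)/((D+2)*Mv^2) := hLHS
      _ ≤ (2/((D+2)*κ^2)) * (-(Sq - D)/(2*m^2)) := hstep
      _ ≤ (2/((D+2)*κ^2)) * ∑ i, Real.log (ν i) :=
          mul_le_mul_of_nonneg_left hlog_lb hc_nonneg
end

section
/- Let X be a real random variable taking values in [a,b], and let g : [a,b] → ℝ be twice continuously differentiable. Then (1/2) (inf_{x∈[a,b]} g''(x)) · Var(X) ≤ E[g(X)] − g(E[X]) ≤ (1/2) (sup_{x∈[a,b]} g''(x)) · Var(X). -/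
open MeasureTheory

/-- Pointwise second-derivative identity at interior points. -/
lemma jensen_aux_deriv_eq {a b : ℝ} {g : ℝ → ℝ} {x : ℝ} (hx : x ∈ Set.Ioo a b) :
    iteratedDerivWithin 2 g (Set.Icc a b) x = deriv (deriv g) x := by
  have hlt : a < b := hx.1.trans hx.2
  have hud : UniqueDiffOn ℝ (Set.Icc a b) := uniqueDiffOn_Icc hlt
  have hmem : x ∈ Set.Icc a b := Set.Ioo_subset_Icc_self hx
  have h1 : iteratedDerivWithin 2 g (Set.Icc a b) x
      = derivWithin (iteratedDerivWithin 1 g (Set.Icc a b)) (Set.Icc a b) x :=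
    congrFun (iteratedDerivWithin_succ (n := 1)) x
  have hevt : (iteratedDerivWithin 1 g (Set.Icc a b)) =ᶠ[nhdsWithin x (Set.Icc a b)] deriv g := by
    have hIoo : ∀ y ∈ Set.Ioo a b,
        iteratedDerivWithin 1 g (Set.Icc a b) y = deriv g y := by
      intro y hy
      rw [iteratedDerivWithin_one,
        derivWithin_of_mem_nhds (Icc_mem_nhds hy.1 hy.2)]
    have : ∀ᶠ y in nhds x, iteratedDerivWithin 1 g (Set.Icc a b) y = deriv g y := by
      filter_upwards [isOpen_Ioo.mem_nhds hx] with y hy using hIoo y hy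
    exact this.filter_mono nhdsWithin_le_nhds
  have hxval : iteratedDerivWithin 1 g (Set.Icc a b) x = deriv g x := by
    rw [iteratedDerivWithin_one,
      derivWithin_of_mem_nhds (Icc_mem_nhds hx.1 hx.2)]
  rw [h1, hevt.derivWithin_eq hxval, derivWithin_of_mem_nhds (Icc_mem_nhds hx.1 hx.2)]

/-- Lower Jensen gap bound from a lower bound on the second derivative. -/
lemma jensen_aux
    {Ω : Type*} [MeasurableSpace Ω] (μ : Measure Ω) [IsProbabilityMeasure μ]
    (a b : ℝ) (hab : a ≤ b)
    (X : Ω → ℝ) (hX : Measurable X) (hXab : ∀ ω, X ω ∈ Set.Icc a b)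
    (g : ℝ → ℝ) (hg : ContDiffOn ℝ 2 g (Set.Icc a b))
    (c : ℝ) (hc : ∀ x ∈ Set.Icc a b, c ≤ iteratedDerivWithin 2 g (Set.Icc a b) x) :
    (1 / 2) * c * (∫ ω, (X ω - ∫ ω', X ω' ∂μ) ^ 2 ∂μ)
      ≤ (∫ ω, g (X ω) ∂μ) - g (∫ ω, X ω ∂μ) := by
  set m : ℝ := ∫ ω, X ω ∂μ with hm
  set h : ℝ → ℝ := fun x => g x - c / 2 * x ^ 2 with hhdef
  -- bounds and integrability
  set C : ℝ := max ‖a‖ ‖b‖ with hC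
  have hXb : ∀ ω, ‖X ω‖ ≤ C := by
    intro ω
    rcases hXab ω with ⟨h1, h2⟩
    rw [Real.norm_eq_abs, abs_le]
    have h3 : ‖a‖ ≤ C := le_max_left _ _
    have h4 : ‖b‖ ≤ C := le_max_right _ _
    rw [Real.norm_eq_abs] at h3 h4
    have h5 := neg_abs_le a
    have h6 := le_abs_self b
    constructor <;> linarith
  have intX : Integrable X μ :=
    ⟨hX.aestronglyMeasurable, HasFiniteIntegral.of_bounded (ae_of_all _ hXb)⟩
  have intX2 : Integrable (fun ω => X ω ^ 2) μ := by
    refine ⟨(hX.pow_const 2).aestronglyMeasurable,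
      HasFiniteIntegral.of_bounded (C := C ^ 2) (ae_of_all _ fun ω => ?_)⟩
    rw [Real.norm_eq_abs, abs_pow]
    exact pow_le_pow_left₀ (abs_nonneg _) (hXb ω) 2
  have hgXmeas : Measurable (fun ω => g (X ω)) := by
    have : Continuous ((Set.Icc a b).restrict g) :=
      continuousOn_iff_continuous_restrict.1 hg.continuousOn
    have hXc : Measurable (fun ω => (⟨X ω, hXab ω⟩ : Set.Icc a b)) := hX.subtype_mk
    exact this.measurable.comp hXc
  obtain ⟨D, hD⟩ := isCompact_Icc.exists_bound_of_continuousOn (f := g) hg.continuousOn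
  have intgX : Integrable (fun ω => g (X ω)) μ :=
    ⟨hgXmeas.aestronglyMeasurable,
      HasFiniteIntegral.of_bounded (C := D) (ae_of_all _ fun ω => hD _ (hXab ω))⟩
  have inthX : Integrable (fun ω => h (X ω)) μ := intgX.sub (intX2.const_mul _)
  -- convexity of h on [a,b]
  have hIoo : interior (Set.Icc a b) = Set.Ioo a b := interior_Icc
  have hgIoo : ContDiffOn ℝ 2 g (Set.Ioo a b) := hg.mono Set.Ioo_subset_Icc_self
  have hder : ∀ y ∈ Set.Ioo a b, HasDerivAt h (deriv g y - c * y) y := by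
    intro y hy
    have hgd : DifferentiableAt ℝ g y :=
      (hg.contDiffAt (Icc_mem_nhds hy.1 hy.2)).differentiableAt two_ne_zero
    have hp : HasDerivAt (fun x : ℝ => c / 2 * x ^ 2) (c * y) y := by
      have : HasDerivAt (fun x : ℝ => c / 2 * x ^ 2) (c / 2 * ((2 : ℕ) * y ^ (2 - 1))) y :=
        (hasDerivAt_pow 2 y).const_mul (c / 2)
      convert this using 1
      norm_num
      ring
    exact hgd.hasDerivAt.sub hp
  have hderfun : Set.EqOn (deriv h) (fun y => deriv g y - c * y) (Set.Ioo a b) :=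
    fun y hy => (hder y hy).deriv
  have hdgIoo : DifferentiableOn ℝ (deriv g) (Set.Ioo a b) :=
    (hgIoo.deriv_of_isOpen (m := 1) isOpen_Ioo (by norm_num)).differentiableOn one_ne_zero
  have hdiff2 : DifferentiableOn ℝ (deriv h) (Set.Ioo a b) := by
    refine DifferentiableOn.congr ?_ hderfun
    exact hdgIoo.sub ((differentiable_id.const_mul c).differentiableOn)
  have hconv : ConvexOn ℝ (Set.Icc a b) h := by
    refine convexOn_of_deriv2_nonneg (convex_Icc a b)
      (hg.continuousOn.sub (Continuous.continuousOn (by continuity)))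
      ?_ ?_ ?_
    · rw [hIoo]
      exact fun y hy => (hder y hy).differentiableAt.differentiableWithinAt
    · rw [hIoo]; exact hdiff2
    · rw [hIoo]
      intro y hy
      have e1 : deriv (deriv h) y = deriv (fun z => deriv g z - c * z) y := by
        apply Filter.EventuallyEq.deriv_eq
        filter_upwards [isOpen_Ioo.mem_nhds hy] with z hz using hderfun hz
      have e2 : deriv (fun z => deriv g z - c * z) y = deriv (deriv g) y - c := by
        have hd1 : DifferentiableAt ℝ (deriv g) y :=
          hdgIoo.differentiableAt (isOpen_Ioo.mem_nhds hy)
        have hd2 : HasDerivAt (fun z : ℝ => c * z) c y := by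
          simpa using (hasDerivAt_id y).const_mul c
        rw [deriv_fun_sub hd1 hd2.differentiableAt, hd2.deriv]
      have e3 : deriv (deriv g) y = iteratedDerivWithin 2 g (Set.Icc a b) y :=
        (jensen_aux_deriv_eq hy).symm
      have : deriv^[2] h y = deriv (deriv h) y := by
        simp [Function.iterate_succ, Function.iterate_one]
      rw [this, e1, e2, e3]
      have := hc y (Set.Ioo_subset_Icc_self hy)
      linarith
  -- Jensen for h
  have hjen : h (∫ ω, X ω ∂μ) ≤ ∫ ω, h (X ω) ∂μ := by
    refine hconv.map_integral_le (hg.continuousOn.sub (Continuous.continuousOn (by continuity)))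
      isClosed_Icc (ae_of_all _ hXab) intX ?_
    exact inthX
  -- compute integrals
  have hinth : ∫ ω, h (X ω) ∂μ = (∫ ω, g (X ω) ∂μ) - c / 2 * ∫ ω, X ω ^ 2 ∂μ := by
    rw [show (fun ω => h (X ω)) = fun ω => g (X ω) - c / 2 * X ω ^ 2 from rfl,
      integral_sub intgX (intX2.const_mul _), integral_const_mul]
  have hvar : ∫ ω, (X ω - m) ^ 2 ∂μ = (∫ ω, X ω ^ 2 ∂μ) - m ^ 2 := by
    have he : (fun ω => (X ω - m) ^ 2) = fun ω => X ω ^ 2 - (2 * m) * X ω + m ^ 2 := by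
      funext ω; ring
    have i1 : Integrable (fun ω => X ω ^ 2 - (2 * m) * X ω) μ :=
      intX2.sub (intX.const_mul (2 * m))
    rw [he, integral_add i1 (integrable_const _),
      integral_sub intX2 (intX.const_mul (2 * m)), integral_const_mul, integral_const]
    simp [← hm]
    ring
  have hhm : h m = g m - c / 2 * m ^ 2 := rfl
  rw [hvar]
  rw [hinth, hhm] at hjen
  linarith

/-- (Jensen gap bounds.)  Let `X` be a random variable with values in
`[a, b]` on a probability space, and let `g : [a,b] → ℝ` be twice continuously differentiable.
Then `½ (inf_{x ∈ [a,b]} g''(x)) Var X ≤ E[g(X)] − g(E[X]) ≤ ½ (sup_{x ∈ [a,b]} g''(x)) Var X`,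
where `Var X = E[(X − E[X])²]`. -/
theorem jensen_gap_second_derivative_bounds
    {Ω : Type*} [MeasurableSpace Ω] (μ : Measure Ω) [IsProbabilityMeasure μ]
    (a b : ℝ) (hab : a ≤ b)
    (X : Ω → ℝ) (hX : Measurable X) (hXab : ∀ ω, X ω ∈ Set.Icc a b)
    (g : ℝ → ℝ) (hg : ContDiffOn ℝ 2 g (Set.Icc a b)) :
    (1 / 2) * sInf ((fun x => iteratedDerivWithin 2 g (Set.Icc a b) x) '' Set.Icc a b)
        * (∫ ω, (X ω - ∫ ω', X ω' ∂μ) ^ 2 ∂μ)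
      ≤ (∫ ω, g (X ω) ∂μ) - g (∫ ω, X ω ∂μ) ∧
    (∫ ω, g (X ω) ∂μ) - g (∫ ω, X ω ∂μ)
      ≤ (1 / 2) * sSup ((fun x => iteratedDerivWithin 2 g (Set.Icc a b) x) '' Set.Icc a b)
        * (∫ ω, (X ω - ∫ ω', X ω' ∂μ) ^ 2 ∂μ) := by
  rcases eq_or_lt_of_le hab with rfl | hlt
  · -- degenerate case a = b
    have hXa : ∀ ω, X ω = a := fun ω => le_antisymm (hXab ω).2 (hXab ω).1
    have h1 : (fun ω => X ω) = fun _ => a := funext hXa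
    have h2 : ∫ ω, X ω ∂μ = a := by rw [h1]; simp
    have h3 : (fun ω => (X ω - ∫ ω', X ω' ∂μ) ^ 2) = fun _ => (0 : ℝ) := by
      funext ω; rw [h2, hXa ω]; ring
    have h4 : (fun ω => g (X ω)) = fun _ => g a := by funext ω; rw [hXa ω]
    rw [h3, h4, h2]
    simp
  · have hud : UniqueDiffOn ℝ (Set.Icc a b) := uniqueDiffOn_Icc hlt
    have hcont : ContinuousOn (fun x => iteratedDerivWithin 2 g (Set.Icc a b) x) (Set.Icc a b) :=
      hg.continuousOn_iteratedDerivWithin le_rfl hud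
    have hK : IsCompact ((fun x => iteratedDerivWithin 2 g (Set.Icc a b) x) '' Set.Icc a b) :=
      isCompact_Icc.image_of_continuousOn hcont
    constructor
    · refine jensen_aux μ a b hab X hX hXab g hg _ fun x hx => ?_
      exact csInf_le hK.bddBelow ⟨x, hx, rfl⟩
    · have hneg := jensen_aux μ a b hab X hX hXab (-g) hg.neg
        (-sSup ((fun x => iteratedDerivWithin 2 g (Set.Icc a b) x) '' Set.Icc a b))
        (fun x hx => by
          rw [iteratedDerivWithin_neg]
          exact neg_le_neg (le_csSup hK.bddAbove ⟨x, hx, rfl⟩))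
      have hintneg : ∫ ω, (-g) (X ω) ∂μ = - ∫ ω, g (X ω) ∂μ := by
        simp [integral_neg]
      rw [hintneg] at hneg
      simp only [Pi.neg_apply] at hneg
      linarith
end

section
/- Let μ ∈ ℝ^d and let Σ ∈ ℝ^{d×d} be symmetric positive definite, and let p = N(μ, Σ). Then the relative Fisher information matrix of γ with respect to p equals FI(γ, p) = (Σ^{-1} − I_d)² + Σ^{-1} μ μᵀ Σ^{-1}. -/
open MeasureTheory ProbabilityTheory Matrix

open Real Filter

lemma exp_half_deriv (x : ℝ) : HasDerivAt (fun t : ℝ => -Real.exp (-(t^2/2))) (x * Real.exp (-(x^2/2))) x := by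
  have h1 : HasDerivAt (fun t : ℝ => -(t^2/2)) (-x) x := by
    have := (hasDerivAt_pow 2 x).div_const 2
    simpa [Pi.neg_def] using this.neg
  have h2 : HasDerivAt (fun t : ℝ => -Real.exp (-(t^2/2))) (-(Real.exp (-(x^2/2)) * -x)) x := (h1.exp).neg
  convert h2 using 1
  ring

lemma integrable_sq_exp : Integrable (fun x : ℝ => x^2 * Real.exp (-(x^2/2))) := by
  have := integrable_rpow_mul_exp_neg_mul_sq (b := (1:ℝ)/2) (by norm_num) (s := 2) (by norm_num)
  have h2 : ∀ x : ℝ, x ^ (2:ℝ) = x ^ (2:ℕ) := fun x => by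
    rw [show (2:ℝ) = ((2:ℕ):ℝ) by norm_num, Real.rpow_natCast]
  refine this.congr ?_
  filter_upwards with x
  rw [h2]
  ring_nf

lemma integrable_exp_half : Integrable (fun x : ℝ => Real.exp (-(x^2/2))) := by
  have := integrable_exp_neg_mul_sq (b := (1:ℝ)/2) (by norm_num)
  refine this.congr ?_
  filter_upwards with x
  ring_nf

lemma integrable_mul_exp_half : Integrable (fun x : ℝ => x * Real.exp (-(x^2/2))) := by
  have := integrable_mul_exp_neg_mul_sq (b := (1:ℝ)/2) (by norm_num)
  refine this.congr ?_
  filter_upwards with x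
  ring_nf

lemma integral_exp_half : ∫ x : ℝ, Real.exp (-(x^2/2)) = Real.sqrt (2 * π) := by
  have := integral_gaussian (1/2)
  rw [show ∫ x : ℝ, Real.exp (-(1/2) * x^2) = ∫ x : ℝ, Real.exp (-(x^2/2)) by congr 1; ext x; ring_nf] at this
  rw [this]
  congr 1
  rw [div_div_eq_mul_div, div_one]
  ring

lemma integral_mul_exp_half : ∫ x : ℝ, x * Real.exp (-(x^2/2)) = 0 := by
  have A : MeasurableEmbedding (fun x : ℝ => -x) :=
    (Homeomorph.neg ℝ).isClosedEmbedding.measurableEmbedding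
  have h := A.integral_map (μ := volume) (g := fun x : ℝ => x * Real.exp (-(x^2/2)))
  rw [Measure.map_neg_eq_self (volume : Measure ℝ)] at h
  have : ∫ x : ℝ, -x * Real.exp (-((-x)^2/2)) = ∫ x : ℝ, x * Real.exp (-(x^2/2)) := by
    simpa using h.symm
  have h2 : ∫ x : ℝ, -x * Real.exp (-((-x)^2/2)) = - ∫ x : ℝ, x * Real.exp (-(x^2/2)) := by
    rw [← MeasureTheory.integral_neg]
    congr 1; ext x; ring_nf
  linarith [this, h2]

lemma integral_sq_exp_half : ∫ x : ℝ, x^2 * Real.exp (-(x^2/2)) = Real.sqrt (2 * π) := by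
  have hu : ∀ x : ℝ, HasDerivAt (fun t : ℝ => t) (1:ℝ) x := fun x => hasDerivAt_id x
  have hv : ∀ x : ℝ, HasDerivAt (fun t : ℝ => -Real.exp (-(t^2/2))) (x * Real.exp (-(x^2/2))) x :=
    exp_half_deriv
  have h := MeasureTheory.integral_mul_deriv_eq_deriv_mul_of_integrable (fun x _ => hu x) (fun x _ => hv x)
    ?_ ?_ ?_
  · rw [show ∫ x : ℝ, x * (x * Real.exp (-(x^2/2))) = ∫ x : ℝ, x^2 * Real.exp (-(x^2/2)) by congr 1; ext x; ring] at h
    rw [h, ← integral_exp_half, ← MeasureTheory.integral_neg]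
    congr 1; ext x; ring
  · refine integrable_sq_exp.congr ?_
    filter_upwards with x
    simp [Pi.mul_apply]; ring
  · refine integrable_exp_half.neg.congr ?_
    filter_upwards with x
    simp [Pi.mul_apply]
  · refine integrable_mul_exp_half.neg.congr ?_
    filter_upwards with x
    simp [Pi.mul_apply]

lemma gaussianPDFReal_zero_one (x : ℝ) :
    gaussianPDFReal 0 1 x = (Real.sqrt (2 * π))⁻¹ * Real.exp (-(x^2/2)) := by
  simp [gaussianPDFReal]
  left; ring

noncomputable def gpdfNN (x : ℝ) : NNReal := (gaussianPDFReal 0 1 x).toNNReal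

lemma gpdfNN_meas : Measurable gpdfNN :=
  (measurable_gaussianPDFReal 0 1).real_toNNReal

lemma gaussianReal_eq_withDensity :
    gaussianReal 0 1 = MeasureTheory.volume.withDensity (fun x => (gpdfNN x : ENNReal)) := by
  rw [gaussianReal_of_var_ne_zero 0 one_ne_zero]
  rfl

lemma integral_gaussianReal_eq (g : ℝ → ℝ) :
    ∫ x, g x ∂(gaussianReal 0 1) = ∫ x, gaussianPDFReal 0 1 x * g x := by
  rw [gaussianReal_eq_withDensity, integral_withDensity_eq_integral_smul gpdfNN_meas]
  congr 1
  ext x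
  rw [NNReal.smul_def, smul_eq_mul]
  congr 1
  exact Real.coe_toNNReal _ (gaussianPDFReal_nonneg 0 1 x)

lemma integrable_gaussianReal_iff (g : ℝ → ℝ) :
    Integrable g (gaussianReal 0 1) ↔ Integrable (fun x => gaussianPDFReal 0 1 x * g x) := by
  rw [gaussianReal_eq_withDensity, integrable_withDensity_iff_integrable_smul gpdfNN_meas]
  have hx : ∀ x, gpdfNN x • g x = gaussianPDFReal 0 1 x * g x := fun x => by
    rw [NNReal.smul_def, smul_eq_mul]
    congr 1
    exact Real.coe_toNNReal _ (gaussianPDFReal_nonneg 0 1 x)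
  constructor <;> intro h <;> refine h.congr ?_ <;> filter_upwards with x
  · exact hx x
  · exact (hx x).symm

lemma integrable_id_gaussian : Integrable (fun x : ℝ => x) (gaussianReal 0 1) := by
  rw [integrable_gaussianReal_iff]
  refine (integrable_mul_exp_half.const_mul ((Real.sqrt (2 * π))⁻¹)).congr ?_
  filter_upwards with x
  rw [gaussianPDFReal_zero_one]
  ring

lemma integrable_mul_self_gaussian : Integrable (fun x : ℝ => x * x) (gaussianReal 0 1) := by
  rw [integrable_gaussianReal_iff]
  refine (integrable_sq_exp.const_mul ((Real.sqrt (2 * π))⁻¹)).congr ?_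
  filter_upwards with x
  rw [gaussianPDFReal_zero_one]
  ring

lemma integral_id_gaussian : ∫ x, x ∂(gaussianReal 0 1) = 0 := by
  rw [integral_gaussianReal_eq]
  have : ∫ x, gaussianPDFReal 0 1 x * x = (Real.sqrt (2 * π))⁻¹ * ∫ x : ℝ, x * Real.exp (-(x^2/2)) := by
    rw [← integral_const_mul]
    congr 1; ext x; rw [gaussianPDFReal_zero_one]; ring
  rw [this, integral_mul_exp_half, mul_zero]

lemma integral_mul_self_gaussian : ∫ x, x * x ∂(gaussianReal 0 1) = 1 := by
  rw [integral_gaussianReal_eq]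
  have : ∫ x, gaussianPDFReal 0 1 x * (x * x) = (Real.sqrt (2 * π))⁻¹ * ∫ x : ℝ, x^2 * Real.exp (-(x^2/2)) := by
    rw [← integral_const_mul]
    congr 1; ext x; rw [gaussianPDFReal_zero_one]; ring
  rw [this, integral_sq_exp_half, inv_mul_cancel₀]
  positivity


section Pi

variable {d : ℕ}

open Finset

lemma stdGaussian_moments (k l : Fin d) :
    (∫ x, x k ∂(stdGaussian d) = 0) ∧
    (∫ x, x k * x l ∂(stdGaussian d) = if k = l then 1 else 0) ∧
    Integrable (fun x => x k) (stdGaussian d) ∧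
    Integrable (fun x => x k * x l) (stdGaussian d) := by
  letI : MeasureSpace ℝ := ⟨gaussianReal 0 1⟩
  haveI : IsProbabilityMeasure (volume : Measure ℝ) :=
    (inferInstance : IsProbabilityMeasure (gaussianReal 0 1))
  haveI : SigmaFinite (volume : Measure ℝ) := inferInstance
  have hvol : stdGaussian d = (volume : Measure (Fin d → ℝ)) := rfl
  -- single coordinate as a product
  have h1 : ∀ x : Fin d → ℝ, x k = ∏ i, (fun i (t : ℝ) => if i = k then t else 1) i (x i) := by
    intro x
    rw [Finset.prod_ite_eq' Finset.univ k (fun i => x i)]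
    simp
  have hint1 : ∀ i : Fin d, Integrable ((fun i (t : ℝ) => if i = k then t else 1) i)
      (volume : Measure ℝ) := by
    intro i
    by_cases h : i = k
    · simp only [if_pos h]
      exact integrable_id_gaussian
    · simp only [if_neg h]
      exact integrable_const 1
  set g : Fin d → Fin d → Fin d → ℝ → ℝ :=
    fun k l i t => if i = k then (if k = l then t * t else t) else if i = l then t else 1 with hgdef
  have hg : ∀ k l : Fin d, ∀ x : Fin d → ℝ, x k * x l = ∏ i, g k l i (x i) := by
    intro k l x
    by_cases hkl : k = l
    · subst hkl
      rw [Finset.prod_eq_single k]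
      · simp [g]
      · intro i _ hik
        simp [g, hik]
      · intro h; exact absurd (Finset.mem_univ k) h
    · rw [← Finset.mul_prod_erase Finset.univ _ (Finset.mem_univ k)]
      have hlk : l ∈ Finset.univ.erase k := by
        simp [Ne.symm hkl]
      rw [← Finset.mul_prod_erase _ _ hlk]
      have : ∏ i ∈ (Finset.univ.erase k).erase l, g k l i (x i) = 1 := by
        refine Finset.prod_eq_one ?_
        intro i hi
        rcases Finset.mem_erase.mp hi with ⟨hil, hi2⟩
        rcases Finset.mem_erase.mp hi2 with ⟨hik, _⟩
        simp [g, hik, hil]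
      rw [this]
      simp [g, hkl, Ne.symm hkl]
  have hintg : ∀ k l i : Fin d, Integrable (g k l i) (volume : Measure ℝ) := by
    intro k l i
    by_cases hik : i = k
    · by_cases hkl : k = l
      · simp only [g, if_pos hik, if_pos hkl]
        exact integrable_mul_self_gaussian
      · simp only [g, if_pos hik, if_neg hkl]
        exact integrable_id_gaussian
    · by_cases hil : i = l
      · simp only [g, if_neg hik, if_pos hil]
        exact integrable_id_gaussian
      · simp only [g, if_neg hik, if_neg hil]
        exact integrable_const 1
  refine ⟨?_, ?_, ?_, ?_⟩
  · rw [hvol, show (fun x : Fin d → ℝ => x k)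
      = fun x => ∏ i, (fun i (t : ℝ) => if i = k then t else 1) i (x i) from funext h1]
    rw [MeasureTheory.integral_fintype_prod_volume_eq_prod (f := fun i (t : ℝ) => if i = k then t else 1)]
    refine Finset.prod_eq_zero (Finset.mem_univ k) ?_
    simp only [if_pos rfl]
    exact integral_id_gaussian
  · rw [hvol, show (fun x : Fin d → ℝ => x k * x l)
      = fun x => ∏ i, g k l i (x i) from funext (hg k l)]
    rw [MeasureTheory.integral_fintype_prod_volume_eq_prod (f := g k l)]
    by_cases hkl : k = l
    · subst hkl
      rw [if_pos rfl]
      refine Finset.prod_eq_one ?_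
      intro i _
      by_cases h : i = k
      · subst h
        simp only [g, if_pos rfl]
        exact integral_mul_self_gaussian
      · simp only [g, if_neg h]
        simp
    · rw [if_neg hkl]
      refine Finset.prod_eq_zero (Finset.mem_univ k) ?_
      simp only [g, if_pos rfl, if_neg hkl]
      exact integral_id_gaussian
  · rw [hvol]
    have := MeasureTheory.Integrable.fintype_prod (f := fun i (t : ℝ) => if i = k then t else 1) hint1
    exact this.congr (by filter_upwards with x using (h1 x).symm)
  · rw [hvol]
    have := MeasureTheory.Integrable.fintype_prod (f := g k l) (hintg k l)
    exact this.congr (by filter_upwards with x using (hg k l x).symm)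

end Pi

lemma sg_int_coord {d : ℕ} (k : Fin d) : ∫ x, x k ∂(stdGaussian d) = 0 :=
  (stdGaussian_moments k k).1

lemma sg_int_mul {d : ℕ} (k l : Fin d) :
    ∫ x, x k * x l ∂(stdGaussian d) = if k = l then 1 else 0 :=
  (stdGaussian_moments k l).2.1

lemma sg_integrable_coord {d : ℕ} (k : Fin d) : Integrable (fun x => x k) (stdGaussian d) :=
  (stdGaussian_moments k k).2.2.1

lemma sg_integrable_mul {d : ℕ} (k l : Fin d) :
    Integrable (fun x => x k * x l) (stdGaussian d) :=
  (stdGaussian_moments k l).2.2.2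

instance {d : ℕ} : IsProbabilityMeasure (stdGaussian d) := by
  unfold _root_.stdGaussian; infer_instance


/-- Let `μ ∈ ℝ^d`, `Σ` symmetric positive definite, and `p = N(μ, Σ)`.
Then the relative Fisher information matrix of `γ` with respect to `p`,
`FI(γ, p) = E_γ[∇ log (γ/p)(x) (∇ log (γ/p)(x))ᵀ]`, equals
`(Σ⁻¹ − I_d)² + Σ⁻¹ μ μᵀ Σ⁻¹`.  Here `∇ log (γ/p)(x) = −x + Σ⁻¹ (x − μ)` since
`∇ log p(x) = −Σ⁻¹ (x − μ)` and `∇ log γ(x) = −x`. -/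
theorem relative_fisher_information_gaussian
    {d : ℕ} (μv : Fin d → ℝ) (Sig : Matrix (Fin d) (Fin d) ℝ) (hSig : Sig.PosDef) :
    (Matrix.of fun i j =>
        ∫ x, (Sig⁻¹.mulVec (x - μv) - x) i * (Sig⁻¹.mulVec (x - μv) - x) j ∂(stdGaussian d))
      = (Sig⁻¹ - 1) ^ 2 + Sig⁻¹ * Matrix.vecMulVec μv μv * Sig⁻¹ := by
  set A : Matrix (Fin d) (Fin d) ℝ := Sig⁻¹ - 1 with hAdef
  set b : Fin d → ℝ := Sig⁻¹.mulVec μv with hbdef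
  have hsymm : ∀ a c, Sig⁻¹ a c = Sig⁻¹ c a := by
    intro a c
    have h0 : Sigᵀ = Sig := hSig.isHermitian.eq
    have h1 : (Sig⁻¹)ᵀ = Sig⁻¹ := by rw [Matrix.transpose_nonsing_inv, h0]
    nth_rewrite 1 [← h1]
    exact Matrix.transpose_apply _ a c
  have hAsymm : ∀ a c, A a c = A c a := by
    intro a c
    simp [hAdef, Matrix.sub_apply, hsymm a c, Matrix.one_apply, eq_comm]
  have key : ∀ (i : Fin d) (x : Fin d → ℝ),
      (Sig⁻¹.mulVec (x - μv) - x) i = (∑ k, A i k * x k) - b i := by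
    intro i x
    simp only [Pi.sub_apply, Matrix.mulVec, dotProduct, hAdef, hbdef, Matrix.sub_apply,
      Matrix.one_apply, sub_mul, ite_mul, one_mul, zero_mul]
    simp only [mul_sub, Finset.sum_sub_distrib, Finset.sum_ite_eq, Finset.mem_univ, if_true]
    ring
  ext i j
  simp only [Matrix.of_apply]
  have expand : ∀ x : Fin d → ℝ,
      (Sig⁻¹.mulVec (x - μv) - x) i * (Sig⁻¹.mulVec (x - μv) - x) j
        = (∑ k, ∑ l, (A i k * A j l) * (x k * x l))
          - (∑ k, (A i k * b j + b i * A j k) * x k) + b i * b j := by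
    intro x
    rw [key i x, key j x]
    have hST : (∑ k, A i k * x k) * (∑ l, A j l * x l)
        = ∑ k, ∑ l, (A i k * A j l) * (x k * x l) := by
      rw [Finset.sum_mul_sum]
      exact Finset.sum_congr rfl fun k _ => Finset.sum_congr rfl fun l _ => by ring
    have e2 : (∑ k, (A i k * b j + b i * A j k) * x k)
        = (∑ k, A i k * x k) * b j + b i * (∑ k, A j k * x k) := by
      rw [Finset.sum_mul, Finset.mul_sum, ← Finset.sum_add_distrib]
      exact Finset.sum_congr rfl fun k _ => by ring
    rw [e2, ← hST]
    ring
  have hb : ∀ i : Fin d, b i = ∑ a, Sig⁻¹ i a * μv a := fun i => rfl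
  have I1 : ∀ k l : Fin d, Integrable
      (fun x : Fin d → ℝ => (A i k * A j l) * (x k * x l)) (stdGaussian d) :=
    fun k l => (sg_integrable_mul k l).const_mul _
  have Isum1 : Integrable (fun x : Fin d → ℝ =>
      ∑ k, ∑ l, (A i k * A j l) * (x k * x l)) (stdGaussian d) :=
    integrable_finset_sum _ fun k _ => integrable_finset_sum _ fun l _ => I1 k l
  have I2 : ∀ k : Fin d, Integrable
      (fun x : Fin d → ℝ => (A i k * b j + b i * A j k) * x k) (stdGaussian d) :=
    fun k => (sg_integrable_coord k).const_mul _
  have Isum2 : Integrable (fun x : Fin d → ℝ =>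
      ∑ k, (A i k * b j + b i * A j k) * x k) (stdGaussian d) :=
    integrable_finset_sum _ fun k _ => I2 k
  simp only [expand]
  have IsumD : Integrable (fun x : Fin d → ℝ =>
      (∑ k, ∑ l, (A i k * A j l) * (x k * x l)) - ∑ k, (A i k * b j + b i * A j k) * x k)
      (stdGaussian d) := Isum1.sub Isum2
  rw [integral_add IsumD (integrable_const _), integral_sub Isum1 Isum2,
    integral_finset_sum _ (fun k _ => integrable_finset_sum _ fun l _ => I1 k l),
    integral_finset_sum _ (fun k _ => I2 k), integral_const]
  have v1 : ∀ k : Fin d, ∫ x, ∑ l, (A i k * A j l) * (x k * x l) ∂(stdGaussian d)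
      = A i k * A j k := by
    intro k
    rw [integral_finset_sum _ (fun l _ => I1 k l)]
    have hterm : ∀ l : Fin d, ∫ x, (A i k * A j l) * (x k * x l) ∂(stdGaussian d)
        = if k = l then A i k * A j l else 0 := by
      intro l
      rw [MeasureTheory.integral_const_mul, sg_int_mul]
      by_cases h : k = l <;> simp [h]
    simp only [hterm]
    rw [Finset.sum_ite_eq Finset.univ k (fun l => A i k * A j l)]
    simp
  have v2 : ∀ k : Fin d, ∫ x, (A i k * b j + b i * A j k) * x k ∂(stdGaussian d) = 0 := by
    intro k
    rw [MeasureTheory.integral_const_mul, sg_int_coord, mul_zero]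
  simp only [v1, v2, Finset.sum_const_zero, sub_zero, measure_univ, probReal_univ, ENNReal.toReal_one, one_smul,
    smul_eq_mul]
  -- now the RHS
  have h2 : (Sig⁻¹ * Matrix.vecMulVec μv μv * Sig⁻¹) i j = b i * b j := by
    have hPQ : ∀ c, (Sig⁻¹ * Matrix.vecMulVec μv μv) i c = b i * μv c := by
      intro c
      rw [Matrix.mul_apply, hb i, Finset.sum_mul]
      exact Finset.sum_congr rfl fun a _ => by rw [Matrix.vecMulVec_apply]; ring
    rw [Matrix.mul_apply]
    simp only [hPQ]
    rw [hb j, Finset.mul_sum]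
    exact Finset.sum_congr rfl fun c _ => by rw [hsymm c j]; ring
  have h3 : (A ^ 2) i j = ∑ k, A i k * A j k := by
    rw [pow_two, Matrix.mul_apply]
    exact Finset.sum_congr rfl fun k _ => by rw [hAsymm k j]
  rw [Matrix.add_apply, h2, h3, one_mul]
end
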